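/- arXiv:1207.5835 — 4 statements merged into one kernel-verified Lean document; each statement's English description precedes it below -/
import Mathlib

section
/- Let H be a Hilbert space and (h_n) a sequence with ‖h_n‖ ≤ 1. For j ≥ 1 let γ_j := limsup_{N→∞} |(1/N) ∑_{n=1}^N ⟨h_n, h_{n+j}⟩|. If (1/N) ∑_{j=1}^N γ_j → 0 as N → ∞, then the Cesàro means (1/N) ∑_{n=1}^N h_n converge to 0 in norm. -/
open Filter
open scoped InnerProductSpace

def HasDensity (S : Set ℕ) (d : ℝ) : Prop :=
  Tendsto (fun N : ℕ => (∑ k ∈ Finset.Icc 1 N, Set.indicator S (fun _ => (1 : ℝ)) k) / N)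
    atTop (nhds d)


/-- Sum of a shifted sequence differs from the original sum by at most `2*j*C`. -/
lemma vdc_shift {E : Type*} [SeminormedAddCommGroup E] (g : ℕ → E) (C : ℝ)
    (hg : ∀ n, ‖g n‖ ≤ C) (N j : ℕ) :
    ‖(∑ n ∈ Finset.Icc 1 N, g (n + j)) - ∑ n ∈ Finset.Icc 1 N, g n‖ ≤ 2 * j * C := by
  have hIcc : ∀ M : ℕ, Finset.Icc 1 M = Finset.Ioc 0 M := fun M => Finset.Icc_add_one_left_eq_Ioc ..
  have h1 : ∑ n ∈ Finset.Ioc 0 N, g (n + j) = ∑ m ∈ Finset.Ioc j (N + j), g m := by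
    rw [show Finset.Ioc j (N + j) = (Finset.Ioc 0 N).map (addRightEmbedding j) by
      rw [Finset.map_add_right_Ioc, zero_add], Finset.sum_map]
    rfl
  have h2 := Finset.sum_Ioc_consecutive g (Nat.zero_le j) (Nat.le_add_left j N)
  have h3 := Finset.sum_Ioc_consecutive g (Nat.zero_le N) (Nat.le_add_right N j)
  have e1 : ∑ m ∈ Finset.Ioc j (N + j), g m
      = (∑ m ∈ Finset.Ioc 0 (N + j), g m) - ∑ m ∈ Finset.Ioc 0 j, g m := by
    rw [← h2]; abel
  have e2 : ∑ m ∈ Finset.Ioc 0 N, g m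
      = (∑ m ∈ Finset.Ioc 0 (N + j), g m) - ∑ m ∈ Finset.Ioc N (N + j), g m := by
    rw [← h3]; abel
  have hb : ∀ a b : ℕ, ‖∑ m ∈ Finset.Ioc a b, g m‖ ≤ (b - a : ℕ) * C := by
    intro a b
    calc ‖∑ m ∈ Finset.Ioc a b, g m‖ ≤ ∑ m ∈ Finset.Ioc a b, ‖g m‖ := norm_sum_le _ _
      _ ≤ (Finset.Ioc a b).card • C :=
        Finset.sum_le_card_nsmul _ _ C (fun i _ => hg i)
      _ = (b - a : ℕ) * C := by rw [Nat.card_Ioc, nsmul_eq_mul]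
  rw [hIcc, h1, e1, e2]
  have : ((∑ m ∈ Finset.Ioc 0 (N + j), g m) - ∑ m ∈ Finset.Ioc 0 j, g m)
      - ((∑ m ∈ Finset.Ioc 0 (N + j), g m) - ∑ m ∈ Finset.Ioc N (N + j), g m)
      = (∑ m ∈ Finset.Ioc N (N + j), g m) - ∑ m ∈ Finset.Ioc 0 j, g m := by abel
  rw [this]
  have hb1 := hb N (N + j)
  have hb2 := hb 0 j
  simp only [Nat.add_sub_cancel_left, Nat.sub_zero] at hb1 hb2
  calc ‖_ - _‖ ≤ ‖∑ m ∈ Finset.Ioc N (N + j), g m‖ + ‖∑ m ∈ Finset.Ioc 0 j, g m‖ :=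
        norm_sub_le _ _
    _ ≤ (j : ℝ) * C + (j : ℝ) * C := add_le_add hb1 hb2
    _ = 2 * j * C := by ring

/-- Norm of a sum of unit-norm-bounded vectors is at most the cardinality. -/
lemma vdc_norm_sum_le_card {E : Type*} [SeminormedAddCommGroup E] (s : Finset ℕ) (g : ℕ → E)
    (hg : ∀ n, ‖g n‖ ≤ 1) : ‖∑ n ∈ s, g n‖ ≤ s.card := by
  calc ‖∑ n ∈ s, g n‖ ≤ ∑ n ∈ s, ‖g n‖ := norm_sum_le _ _
    _ ≤ s.card • (1 : ℝ) := Finset.sum_le_card_nsmul _ _ 1 (fun i _ => hg i)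
    _ = s.card := by simp

/-- Sum of `Γ ∘ e` over an injective `e` landing in `[0,J]` is at most the full sum. -/
lemma vdc_comp_sum_le {J : ℕ} {Γ : ℕ → ℝ} (hΓ : ∀ d, 0 ≤ Γ d) (s : Finset ℕ) (e : ℕ → ℕ)
    (hinj : ∀ x ∈ s, ∀ y ∈ s, e x = e y → x = y) (hle : ∀ x ∈ s, e x ≤ J) :
    ∑ x ∈ s, Γ (e x) ≤ ∑ d ∈ Finset.Icc 0 J, Γ d := by
  rw [← Finset.sum_image hinj]
  apply Finset.sum_le_sum_of_subset_of_nonneg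
  · intro d hd
    simp only [Finset.mem_image] at hd
    obtain ⟨x, hx, rfl⟩ := hd
    simp only [Finset.mem_Icc]
    exact ⟨Nat.zero_le _, hle x hx⟩
  · exact fun d _ _ => hΓ d

set_option maxHeartbeats 2000000 in
/-- van der Corput lemma: if the Cesàro averages of $\gamma_j$ tend to 0, then the
Cesàro means of the sequence converge to 0 in norm. -/
theorem stmt5 {H : Type*} [NormedAddCommGroup H] [InnerProductSpace ℂ H] [CompleteSpace H]
    (h : ℕ → H) (hbd : ∀ n, ‖h n‖ ≤ 1)
    (γ : ℕ → ℝ)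
    (hγ : ∀ j, 1 ≤ j →
      γ j = Filter.limsup
        (fun N : ℕ => ‖(∑ n ∈ Finset.Icc 1 N, ⟪h n, h (n + j)⟫_ℂ) / N‖) atTop)
    (hces : Tendsto (fun N : ℕ => (∑ j ∈ Finset.Icc 1 N, γ j) / N) atTop (nhds 0)) :
    Tendsto (fun N : ℕ => (N : ℝ)⁻¹ • ∑ n ∈ Finset.Icc 1 N, h n) atTop (nhds 0) := by
  -- basic facts
  have hterm : ∀ n m : ℕ, ‖⟪h n, h m⟫_ℂ‖ ≤ 1 := by
    intro n m
    have := norm_inner_le_norm (𝕜 := ℂ) (h n) (h m)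
    nlinarith [hbd n, hbd m, norm_nonneg (h n), norm_nonneg (h m)]
  set f : ℕ → ℕ → ℂ := fun d N => ∑ n ∈ Finset.Icc 1 N, ⟪h n, h (n + d)⟫_ℂ with hf_def
  have hfN : ∀ d N : ℕ, ‖f d N‖ ≤ N := by
    intro d N
    have := vdc_norm_sum_le_card (Finset.Icc 1 N) (fun n => ⟪h n, h (n + d)⟫_ℂ)
      (fun n => hterm n (n + d))
    simpa using this
  have hu1 : ∀ d N : ℕ, ‖f d N / (N : ℂ)‖ ≤ 1 := by
    intro d N
    rcases Nat.eq_zero_or_pos N with rfl | hN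
    · simp
    · rw [norm_div, Complex.norm_natCast, div_le_one (by exact_mod_cast hN)]
      exact hfN d N
  have hbdd : ∀ d, IsBoundedUnder (· ≤ ·) atTop (fun N : ℕ => ‖f d N / (N : ℂ)‖) :=
    fun d => isBoundedUnder_of ⟨1, fun N => hu1 d N⟩
  have hγnn : ∀ d, 1 ≤ d → 0 ≤ γ d := by
    intro d hd
    rw [hγ d hd]
    exact le_limsup_of_frequently_le (Frequently.of_forall fun N => norm_nonneg _) (hbdd d)
  rw [NormedAddCommGroup.tendsto_nhds_zero]
  intro ε hε
  set δ : ℝ := ε ^ 2 / 20 with hδdef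
  have hδ : 0 < δ := by positivity
  -- choose J
  have hJev : ∀ᶠ J : ℕ in atTop, ‖(∑ j ∈ Finset.Icc 1 J, γ j) / J‖ < δ :=
    (NormedAddCommGroup.tendsto_nhds_zero.mp hces) δ hδ
  obtain ⟨J, ⟨hJ2δ, hJ1⟩, hJG⟩ :=
    (((eventually_ge_atTop ⌈2 / δ⌉₊).and (eventually_ge_atTop 1)).and hJev).exists
  set G : ℝ := ∑ j ∈ Finset.Icc 1 J, γ j with hG_def
  have hGnn : 0 ≤ G := Finset.sum_nonneg fun d hd => hγnn d (Finset.mem_Icc.mp hd).1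
  have hJR : (1 : ℝ) ≤ J := by exact_mod_cast hJ1
  have hJpos : (0 : ℝ) < J := by linarith
  have hGJ : G < δ * J := by
    have : |G / J| < δ := hJG
    have h2 := (abs_lt.mp this).2
    calc G = G / J * J := by field_simp
      _ < δ * J := by apply mul_lt_mul_of_pos_right h2 hJpos
  have h2δJ : 2 ≤ δ * J := by
    have h1 : (2 / δ : ℝ) ≤ ⌈2 / δ⌉₊ := Nat.le_ceil _
    have h2 : ((⌈2 / δ⌉₊ : ℕ) : ℝ) ≤ J := by exact_mod_cast hJ2δ
    calc (2 : ℝ) = 2 / δ * δ := by field_simp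
      _ ≤ J * δ := mul_le_mul_of_nonneg_right (le_trans h1 h2) hδ.le
      _ = δ * J := mul_comm _ _
  -- the "gap" weight
  set Γ : ℕ → ℝ := fun d => if d = 0 then 1 else γ d with hΓ_def
  have hΓnn : ∀ d, 0 ≤ Γ d := by
    intro d
    rcases Nat.eq_zero_or_pos d with rfl | hd
    · simp [hΓ_def]
    · simp only [hΓ_def, if_neg (Nat.pos_iff_ne_zero.mp hd)]
      exact hγnn d hd
  have hΓsum : ∑ d ∈ Finset.Icc 0 J, Γ d = 1 + G := by
    have h0 : (0 : ℕ) ∉ Finset.Icc 1 J := by simp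
    have : Finset.Icc 0 J = insert 0 (Finset.Icc 1 J) := by
      ext x; simp [Finset.mem_Icc, Finset.mem_insert]; omega
    rw [this, Finset.sum_insert h0]
    have he : ∀ d ∈ Finset.Icc 1 J, Γ d = γ d := fun d hd => by
      simp [hΓ_def, Nat.pos_iff_ne_zero.mp (Finset.mem_Icc.mp hd).1]
    rw [Finset.sum_congr rfl he]
    simp [hΓ_def, hG_def]
  -- eventual conditions on N
  have hev : ∀ᶠ N : ℕ in atTop,
      (∀ d ∈ Finset.Icc 1 J, ‖f d N‖ ≤ (γ d + δ) * N) ∧ (1 : ℝ) ≤ N ∧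
      2 * (J : ℝ) / N ≤ δ ∧ 2 * (J : ℝ) / N < ε / 2 := by
    have c1 : ∀ᶠ N : ℕ in atTop, ∀ d ∈ Finset.Icc 1 J, ‖f d N‖ ≤ (γ d + δ) * N := by
      rw [Filter.eventually_all_finset]
      intro d hd
      have hd1 : 1 ≤ d := (Finset.mem_Icc.mp hd).1
      have hls : limsup (fun N : ℕ => ‖f d N / (N : ℂ)‖) atTop < γ d + δ := by
        rw [← hγ d hd1]; linarith
      filter_upwards [eventually_lt_of_limsup_lt hls (hbdd d), eventually_ge_atTop 1]
        with N h1 h2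
      have hNpos : (0 : ℝ) < N := by exact_mod_cast h2
      rw [norm_div, Complex.norm_natCast] at h1
      have := (div_lt_iff₀ hNpos).mp h1
      linarith
    have c2 : ∀ᶠ N : ℕ in atTop, (1 : ℝ) ≤ N := by
      filter_upwards [eventually_ge_atTop 1] with N hN
      exact_mod_cast hN
    have t : Tendsto (fun N : ℕ => 2 * (J : ℝ) / N) atTop (nhds 0) :=
      tendsto_const_div_atTop_nhds_zero_nat _
    have c3 := t.eventually (eventually_le_nhds hδ)
    have c4 := t.eventually (eventually_lt_nhds (by positivity : (0 : ℝ) < ε / 2))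
    filter_upwards [c1, c2, c3, c4] with N h1 h2 h3 h4
    exact ⟨h1, h2, h3, h4⟩
  filter_upwards [hev] with N hN
  obtain ⟨hfd, hN1, hJN, hJNε⟩ := hN
  have hNpos : (0 : ℝ) < N := by linarith
  set s : ℕ → H := fun n => ∑ j ∈ Finset.range J, h (n + j) with hs_def
  set P : ℕ → ℕ → ℂ := fun j j' => ∑ n ∈ Finset.Icc 1 N, ⟪h (n + j), h (n + j')⟫_ℂ
    with hP_def
  -- bound on ‖P j j'‖ for j ≤ j'
  have key : ∀ j j', j < J → j' < J → j ≤ j' →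
      ‖P j j'‖ ≤ Γ (j' - j) * N + δ * N + 2 * J := by
    intro j j' hj hj' hle
    rcases eq_or_lt_of_le hle with rfl | hlt
    · have h1 : ‖P j j‖ ≤ (N : ℝ) := by
        have := vdc_norm_sum_le_card (Finset.Icc 1 N) (fun n => ⟪h (n + j), h (n + j)⟫_ℂ)
          (fun n => hterm _ _)
        simpa [hP_def] using this
      have h2 : Γ (j - j) = 1 := by simp [hΓ_def]
      rw [Nat.sub_self] at *
      rw [h2]
      nlinarith [hδ.le, hNpos.le, hJpos.le]
    · set d := j' - j with hd_def
      have hd1 : 1 ≤ d := by omega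
      have hdJ : d ≤ J := by omega
      have hPe : P j j' = ∑ n ∈ Finset.Icc 1 N, (fun m => ⟪h m, h (m + d)⟫_ℂ) (n + j) := by
        apply Finset.sum_congr rfl
        intro n _
        have he : n + j + d = n + j' := by omega
        simp only [he]
      have hsh := vdc_shift (fun m => ⟪h m, h (m + d)⟫_ℂ) 1 (fun n => hterm n (n + d)) N j
      have hfd' : ‖f d N‖ ≤ (γ d + δ) * N := hfd d (Finset.mem_Icc.mpr ⟨hd1, hdJ⟩)
      have hΓd : Γ d = γ d := by simp [hΓ_def, Nat.pos_iff_ne_zero.mp hd1]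
      have hnorm : ‖P j j'‖ ≤ ‖f d N‖ + 2 * j * 1 := by
        rw [hPe]
        refine le_trans (norm_le_norm_add_norm_sub' _ (f d N)) ?_
        exact add_le_add_right hsh _
      have hjJ : (j : ℝ) ≤ J := by exact_mod_cast hj.le
      rw [hΓd]
      linarith
  have hPb : ∀ j ∈ Finset.range J, ∀ j' ∈ Finset.range J,
      ‖P j j'‖ ≤ Γ (max j j' - min j j') * N + δ * N + 2 * J := by
    intro j hj j' hj'
    rw [Finset.mem_range] at hj hj'
    rcases le_total j j' with hle | hle
    · rw [max_eq_right hle, min_eq_left hle]; exact key j j' hj hj' hle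
    · rw [max_eq_left hle, min_eq_right hle]
      have hconj : P j j' = starRingEnd ℂ (P j' j) := by
        rw [hP_def]
        simp only
        rw [map_sum]
        exact Finset.sum_congr rfl fun n _ => (inner_conj_symm _ _).symm
      rw [hconj, RCLike.norm_conj]
      exact key j' j hj' hj hle
  -- expand ∑ ‖s n‖² into the P's
  have hexp : ∑ n ∈ Finset.Icc 1 N, ‖s n‖ ^ 2
      ≤ ∑ j ∈ Finset.range J, ∑ j' ∈ Finset.range J, ‖P j j'‖ := by
    have e1 : ∀ n, ‖s n‖ ^ 2
        = ∑ j ∈ Finset.range J, ∑ j' ∈ Finset.range J,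
            RCLike.re ⟪h (n + j), h (n + j')⟫_ℂ := by
      intro n
      rw [norm_sq_eq_re_inner (𝕜 := ℂ) (s n), hs_def]
      simp only
      rw [sum_inner, map_sum]
      refine Finset.sum_congr rfl fun j _ => ?_
      rw [inner_sum, map_sum]
    calc ∑ n ∈ Finset.Icc 1 N, ‖s n‖ ^ 2
        = ∑ n ∈ Finset.Icc 1 N, ∑ j ∈ Finset.range J, ∑ j' ∈ Finset.range J,
            RCLike.re ⟪h (n + j), h (n + j')⟫_ℂ := Finset.sum_congr rfl fun n _ => e1 n
      _ = ∑ j ∈ Finset.range J, ∑ n ∈ Finset.Icc 1 N, ∑ j' ∈ Finset.range J,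
            RCLike.re ⟪h (n + j), h (n + j')⟫_ℂ := Finset.sum_comm
      _ = ∑ j ∈ Finset.range J, ∑ j' ∈ Finset.range J, ∑ n ∈ Finset.Icc 1 N,
            RCLike.re ⟪h (n + j), h (n + j')⟫_ℂ :=
          Finset.sum_congr rfl fun j _ => Finset.sum_comm
      _ = ∑ j ∈ Finset.range J, ∑ j' ∈ Finset.range J, RCLike.re (P j j') :=
          Finset.sum_congr rfl fun j _ => Finset.sum_congr rfl fun j' _ =>
            (map_sum _ _ _).symm
      _ ≤ ∑ j ∈ Finset.range J, ∑ j' ∈ Finset.range J, ‖P j j'‖ :=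
          Finset.sum_le_sum fun j _ => Finset.sum_le_sum fun j' _ => RCLike.re_le_norm _
  -- bound the Γ-sums
  have hinner : ∀ j < J, ∑ j' ∈ Finset.range J, Γ (max j j' - min j j') ≤ 2 * (1 + G) := by
    intro j hj
    rw [← Finset.sum_filter_add_sum_filter_not (Finset.range J) (· < j)]
    have b1 : ∑ j' ∈ (Finset.range J).filter (· < j), Γ (max j j' - min j j') ≤ 1 + G := by
      rw [← hΓsum]
      have e : ∀ j' ∈ (Finset.range J).filter (· < j),
          Γ (max j j' - min j j') = Γ (j - j') := by
        intro j' hj'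
        simp only [Finset.mem_filter] at hj'
        rw [max_eq_left hj'.2.le, min_eq_right hj'.2.le]
      rw [Finset.sum_congr rfl e]
      refine vdc_comp_sum_le hΓnn _ (fun x => j - x) ?_ ?_
      · intro x hx y hy hxy
        simp only [Finset.mem_filter] at hx hy
        have hxy' : j - x = j - y := hxy
        omega
      · intro x _
        show j - x ≤ J
        omega
    have b2 : ∑ j' ∈ (Finset.range J).filter (fun x => ¬ x < j),
        Γ (max j j' - min j j') ≤ 1 + G := by
      rw [← hΓsum]
      have e : ∀ j' ∈ (Finset.range J).filter (fun x => ¬ x < j),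
          Γ (max j j' - min j j') = Γ (j' - j) := by
        intro j' hj'
        simp only [Finset.mem_filter, not_lt] at hj'
        rw [max_eq_right hj'.2, min_eq_left hj'.2]
      rw [Finset.sum_congr rfl e]
      refine vdc_comp_sum_le hΓnn _ (fun x => x - j) ?_ ?_
      · intro x hx y hy hxy
        simp only [Finset.mem_filter, not_lt] at hx hy
        have hxy' : x - j = y - j := hxy
        omega
      · intro x hx
        simp only [Finset.mem_filter, Finset.mem_range, not_lt] at hx
        show x - j ≤ J
        omega
    linarith
  -- total bound on the double sum
  have hTot : ∑ j ∈ Finset.range J, ∑ j' ∈ Finset.range J, ‖P j j'‖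
      ≤ (J : ℝ) * ((2 * (1 + G)) * N + (J : ℝ) * (δ * N + 2 * J)) := by
    calc ∑ j ∈ Finset.range J, ∑ j' ∈ Finset.range J, ‖P j j'‖
        ≤ ∑ j ∈ Finset.range J, ∑ j' ∈ Finset.range J,
            (Γ (max j j' - min j j') * N + (δ * N + 2 * J)) :=
          Finset.sum_le_sum fun j hj => Finset.sum_le_sum fun j' hj' => by
            have := hPb j hj j' hj'
            linarith
      _ = ∑ j ∈ Finset.range J,
            ((∑ j' ∈ Finset.range J, Γ (max j j' - min j j')) * N
              + (J : ℝ) * (δ * N + 2 * J)) := by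
          refine Finset.sum_congr rfl fun j _ => ?_
          rw [Finset.sum_add_distrib, ← Finset.sum_mul, Finset.sum_const,
            Finset.card_range, nsmul_eq_mul]
      _ ≤ ∑ j ∈ Finset.range J, ((2 * (1 + G)) * N + (J : ℝ) * (δ * N + 2 * J)) :=
          Finset.sum_le_sum fun j hj => by
            have h1 := hinner j (Finset.mem_range.mp hj)
            have hN0 : (0 : ℝ) ≤ N := hNpos.le
            nlinarith
      _ = (J : ℝ) * ((2 * (1 + G)) * N + (J : ℝ) * (δ * N + 2 * J)) := by
          rw [Finset.sum_const, Finset.card_range, nsmul_eq_mul]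
  -- Cauchy-Schwarz
  set S : H := ∑ n ∈ Finset.Icc 1 N, s n with hS_def
  have hS2 : ‖S‖ ^ 2 ≤ (N : ℝ) * ∑ n ∈ Finset.Icc 1 N, ‖s n‖ ^ 2 := by
    have h1 : ‖S‖ ≤ ∑ n ∈ Finset.Icc 1 N, ‖s n‖ := norm_sum_le _ _
    have h2 : (∑ n ∈ Finset.Icc 1 N, ‖s n‖) ^ 2
        ≤ ((Finset.Icc 1 N).card : ℝ) * ∑ n ∈ Finset.Icc 1 N, ‖s n‖ ^ 2 :=
      sq_sum_le_card_mul_sum_sq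
    have hcard : ((Finset.Icc 1 N).card : ℝ) = N := by
      rw [Nat.card_Icc]; simp
    rw [hcard] at h2
    calc ‖S‖ ^ 2 ≤ (∑ n ∈ Finset.Icc 1 N, ‖s n‖) ^ 2 :=
          pow_le_pow_left₀ (norm_nonneg _) h1 2
      _ ≤ (N : ℝ) * ∑ n ∈ Finset.Icc 1 N, ‖s n‖ ^ 2 := h2
  -- compare S with J • W
  set W : H := ∑ n ∈ Finset.Icc 1 N, h n with hW_def
  have hSW : ‖(J : ℝ) • W - S‖ ≤ 2 * (J : ℝ) ^ 2 := by
    have hswap : S = ∑ j ∈ Finset.range J, ∑ n ∈ Finset.Icc 1 N, h (n + j) :=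
      Finset.sum_comm
    have hdiff : (J : ℝ) • W - S
        = ∑ j ∈ Finset.range J, (W - ∑ n ∈ Finset.Icc 1 N, h (n + j)) := by
      rw [hswap, Finset.sum_sub_distrib, Finset.sum_const, Finset.card_range,
        ← Nat.cast_smul_eq_nsmul ℝ]
    rw [hdiff]
    calc ‖∑ j ∈ Finset.range J, (W - ∑ n ∈ Finset.Icc 1 N, h (n + j))‖
        ≤ ∑ j ∈ Finset.range J, ‖W - ∑ n ∈ Finset.Icc 1 N, h (n + j)‖ := norm_sum_le _ _
      _ ≤ ∑ j ∈ Finset.range J, 2 * (J : ℝ) :=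
          Finset.sum_le_sum fun j hj => by
            have hsh := vdc_shift h 1 hbd N j
            have hjJ : (j : ℝ) ≤ J := by
              exact_mod_cast (Finset.mem_range.mp hj).le
            calc ‖W - ∑ n ∈ Finset.Icc 1 N, h (n + j)‖
                = ‖(∑ n ∈ Finset.Icc 1 N, h (n + j)) - W‖ := norm_sub_rev _ _
              _ ≤ 2 * j * 1 := hsh
              _ ≤ 2 * (J : ℝ) := by linarith
      _ = (J : ℝ) * (2 * (J : ℝ)) := by
          rw [Finset.sum_const, Finset.card_range, nsmul_eq_mul]
      _ = 2 * (J : ℝ) ^ 2 := by ring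
  have hJW : (J : ℝ) * ‖W‖ ≤ ‖S‖ + 2 * (J : ℝ) ^ 2 := by
    have h1 : ‖(J : ℝ) • W‖ ≤ ‖S‖ + ‖(J : ℝ) • W - S‖ :=
      norm_le_norm_add_norm_sub' _ _
    rw [norm_smul, Real.norm_eq_abs, abs_of_nonneg (Nat.cast_nonneg J)] at h1
    linarith
  -- put everything together
  have hx2 : ‖S‖ ^ 2
      ≤ (N : ℝ) * ((J : ℝ) * ((2 * (1 + G)) * N + (J : ℝ) * (δ * N + 2 * J))) := by
    calc ‖S‖ ^ 2 ≤ (N : ℝ) * ∑ n ∈ Finset.Icc 1 N, ‖s n‖ ^ 2 := hS2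
      _ ≤ (N : ℝ) * ∑ j ∈ Finset.range J, ∑ j' ∈ Finset.range J, ‖P j j'‖ :=
          mul_le_mul_of_nonneg_left hexp hNpos.le
      _ ≤ _ := mul_le_mul_of_nonneg_left hTot hNpos.le
  have hc3 : 2 * (J : ℝ) ≤ δ * N := by
    have := (div_le_iff₀ hNpos).mp hJN
    linarith
  have hx5 : ‖S‖ ^ 2 ≤ 5 * δ * ((J : ℝ) * N) ^ 2 := by
    nlinarith [mul_le_mul_of_nonneg_left h2δJ
        (show (0 : ℝ) ≤ (J : ℝ) * (N : ℝ) ^ 2 by positivity),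
      mul_le_mul_of_nonneg_left hGJ.le
        (show (0 : ℝ) ≤ 2 * (J : ℝ) * (N : ℝ) ^ 2 by positivity),
      mul_le_mul_of_nonneg_left hc3
        (show (0 : ℝ) ≤ (J : ℝ) ^ 2 * (N : ℝ) by positivity), hx2]
  have hShalf : ‖S‖ ≤ (J : ℝ) * N * (ε / 2) := by
    have h5δ : 5 * δ = ε ^ 2 / 4 := by rw [hδdef]; ring
    nlinarith [hx5, norm_nonneg S, sq_nonneg (‖S‖ - (J : ℝ) * N * (ε / 2)),
      mul_pos (mul_pos hJpos hNpos) (half_pos hε)]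
  have hWb : ‖W‖ ≤ (N : ℝ) * (ε / 2) + 2 * (J : ℝ) := by
    have h6 : (J : ℝ) * ‖W‖ ≤ (J : ℝ) * ((N : ℝ) * (ε / 2) + 2 * (J : ℝ)) := by
      nlinarith [hJW, hShalf]
    exact le_of_mul_le_mul_left h6 hJpos
  rw [norm_smul, Real.norm_eq_abs, abs_inv, abs_of_nonneg (Nat.cast_nonneg N)]
  have h7 : (N : ℝ)⁻¹ * ‖W‖ ≤ ε / 2 + 2 * (J : ℝ) / N := by
    rw [inv_mul_le_iff₀ hNpos]
    have : (N : ℝ) * (ε / 2 + 2 * (J : ℝ) / N) = (N : ℝ) * (ε / 2) + 2 * (J : ℝ) := by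
      field_simp
    rw [this]
    exact hWb
  linarith
end

section
/- Let T be a unitary operator on a Hilbert space H that is almost weakly stable (every orbit converges weakly to 0 along a set of indices of density 1). Then for every h ∈ H and every nonconstant polynomial p with integer coefficients mapping ℕ⁺ into ℕ, the sequence (T^{p(n)} h)_{n≥1} is almost weakly stable. -/
open Filter Polynomial
open scoped InnerProductSpace

namespace AWS

/-- Cesàro averages tend to zero, in `ε`–`N` form. -/
def CesZero (f : ℕ → ℝ) : Prop :=
  ∀ ε : ℝ, 0 < ε → ∀ᶠ N : ℕ in atTop, (∑ k ∈ Finset.Icc 1 N, f k) ≤ ε * N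

lemma cesZero_tendsto {f : ℕ → ℝ} (h0 : ∀ n, 0 ≤ f n) (h : CesZero f) :
    Tendsto (fun N : ℕ => (∑ k ∈ Finset.Icc 1 N, f k) / N) atTop (nhds 0) := by
  rw [Metric.tendsto_atTop]
  intro ε hε
  obtain ⟨N₀, hN₀⟩ := eventually_atTop.mp (h (ε / 2) (by positivity))
  refine ⟨max N₀ 1, fun N hN => ?_⟩
  have h1 : (1 : ℕ) ≤ N := le_trans (le_max_right _ _) hN
  have hNpos : (0 : ℝ) < N := by exact_mod_cast h1
  have hsum0 : 0 ≤ ∑ k ∈ Finset.Icc 1 N, f k := Finset.sum_nonneg fun k _ => h0 k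
  have hb := hN₀ N (le_trans (le_max_left _ _) hN)
  rw [Real.dist_eq, sub_zero, abs_of_nonneg (by positivity)]
  have : (∑ k ∈ Finset.Icc 1 N, f k) / N ≤ ε / 2 := (div_le_iff₀ hNpos).mpr (by linarith)
  linarith

lemma cesZero_of_tendsto {f : ℕ → ℝ}
    (h : Tendsto (fun N : ℕ => (∑ k ∈ Finset.Icc 1 N, f k) / N) atTop (nhds 0)) :
    CesZero f := by
  intro ε hε
  have := (Metric.tendsto_atTop.mp h) (ε / 2) (by positivity)
  obtain ⟨N₀, hN₀⟩ := this
  filter_upwards [eventually_ge_atTop (max N₀ 1)] with N hN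
  have h1 : (1 : ℕ) ≤ N := le_trans (le_max_right _ _) hN
  have hNpos : (0 : ℝ) < N := by exact_mod_cast h1
  have hb := hN₀ N (le_trans (le_max_left _ _) hN)
  rw [Real.dist_eq, sub_zero] at hb
  have : (∑ k ∈ Finset.Icc 1 N, f k) / N ≤ ε / 2 :=
    le_trans (le_abs_self _) hb.le
  calc (∑ k ∈ Finset.Icc 1 N, f k) = ((∑ k ∈ Finset.Icc 1 N, f k) / N) * N := by
        field_simp
    _ ≤ (ε / 2) * N := by
        apply mul_le_mul_of_nonneg_right this hNpos.le
    _ ≤ ε * N := by nlinarith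

lemma cesZero_mono {f g : ℕ → ℝ} {B : ℝ} (hf0 : ∀ n, 0 ≤ f n) (hfB : ∀ n, f n ≤ B)
    (hg0 : ∀ n, 0 ≤ g n) (hfg : ∀ᶠ n in atTop, f n ≤ g n) (hg : CesZero g) : CesZero f := by
  intro ε hε
  obtain ⟨n₀, hn₀⟩ := eventually_atTop.mp hfg
  have hB : 0 ≤ B := le_trans (hf0 0) (hfB 0)
  have hev := hg (ε / 2) (by positivity)
  have hev2 : ∀ᶠ N : ℕ in atTop, (n₀ : ℝ) * B ≤ ε / 2 * N := by
    have : Tendsto (fun N : ℕ => ε / 2 * (N : ℝ)) atTop atTop :=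
      Tendsto.const_mul_atTop (by positivity) tendsto_natCast_atTop_atTop
    exact this.eventually_ge_atTop _
  filter_upwards [hev, hev2] with N h1 h2
  have key : (∑ k ∈ Finset.Icc 1 N, f k) ≤ (n₀ : ℝ) * B + ∑ k ∈ Finset.Icc 1 N, g k := by
    have : ∀ k ∈ Finset.Icc 1 N, f k ≤ (if k < n₀ then B else 0) + g k := by
      intro k _
      by_cases hk : k < n₀
      · simp only [hk, if_true]
        have := hf0 k; have := hfB k; have := hg0 k; linarith
      · simp only [hk, if_false, zero_add]
        exact hn₀ k (not_lt.mp hk)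
    calc (∑ k ∈ Finset.Icc 1 N, f k)
        ≤ ∑ k ∈ Finset.Icc 1 N, ((if k < n₀ then B else 0) + g k) :=
          Finset.sum_le_sum this
      _ = (∑ k ∈ Finset.Icc 1 N, (if k < n₀ then B else 0)) + ∑ k ∈ Finset.Icc 1 N, g k := by
          rw [Finset.sum_add_distrib]
      _ ≤ (n₀ : ℝ) * B + ∑ k ∈ Finset.Icc 1 N, g k := by
          gcongr ?_ + _
          calc (∑ k ∈ Finset.Icc 1 N, (if k < n₀ then B else 0))
              ≤ ∑ k ∈ Finset.Icc 1 N ∩ Finset.range n₀, B := by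
                rw [← Finset.sum_filter_add_sum_filter_not _ (fun k => k < n₀)]
                have h1 : (Finset.Icc 1 N).filter (fun k => k < n₀) =
                    Finset.Icc 1 N ∩ Finset.range n₀ := by
                  ext k; simp [Finset.mem_filter, Finset.mem_inter, Finset.mem_range]
                rw [← h1]
                have : ∑ k ∈ (Finset.Icc 1 N).filter (fun k => ¬ k < n₀),
                    (if k < n₀ then B else 0) = 0 := by
                  apply Finset.sum_eq_zero; intro k hk
                  simp only [Finset.mem_filter] at hk
                  simp [hk.2]
                rw [this, add_zero]
                apply Finset.sum_le_sum
                intro k hk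
                simp only [Finset.mem_filter] at hk
                simp [hk.2]
            _ ≤ (n₀ : ℝ) * B := by
                rw [Finset.sum_const, nsmul_eq_mul]
                have : (Finset.Icc 1 N ∩ Finset.range n₀).card ≤ n₀ := by
                  calc (Finset.Icc 1 N ∩ Finset.range n₀).card
                      ≤ (Finset.range n₀).card := Finset.card_le_card (Finset.inter_subset_right)
                    _ = n₀ := Finset.card_range n₀
                exact mul_le_mul_of_nonneg_right (by exact_mod_cast this) hB
  calc (∑ k ∈ Finset.Icc 1 N, f k) ≤ (n₀:ℝ) * B + ∑ k ∈ Finset.Icc 1 N, g k := key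
    _ ≤ ε / 2 * N + ε / 2 * N := by gcongr <;> linarith [h1, h2]
    _ = ε * N := by ring

lemma cesZero_const_mul {g : ℕ → ℝ} (c : ℝ) (hc : 0 ≤ c) (hg : CesZero g) :
    CesZero (fun n => c * g n) := by
  intro ε hε
  rcases eq_or_lt_of_le hc with hc0 | hcpos
  · filter_upwards [hg ε hε] with N _
    simp only [← hc0, zero_mul]
    simp
    positivity
  · filter_upwards [hg (ε / c) (by positivity)] with N hN
    rw [← Finset.mul_sum]
    calc c * ∑ k ∈ Finset.Icc 1 N, g k ≤ c * (ε / c * N) := by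
          exact mul_le_mul_of_nonneg_left hN hc
      _ = ε * N := by field_simp
lemma sum_ite_head_le (n₀ N : ℕ) (C : ℝ) (hC : 0 ≤ C) :
    (∑ k ∈ Finset.Icc 1 N, (if k < n₀ then C else 0)) ≤ n₀ * C := by
  classical
  rw [← Finset.sum_filter]
  have hsub : (Finset.Icc 1 N).filter (fun k => k < n₀) ⊆ Finset.range n₀ := by
    intro k hk
    simp only [Finset.mem_filter, Finset.mem_range] at *
    exact hk.2
  calc (∑ _k ∈ (Finset.Icc 1 N).filter (fun k => k < n₀), C)
      = ((Finset.Icc 1 N).filter (fun k => k < n₀)).card * C := by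
        rw [Finset.sum_const, nsmul_eq_mul]
    _ ≤ (n₀ : ℝ) * C := by
        apply mul_le_mul_of_nonneg_right _ hC
        exact_mod_cast (Finset.card_le_card hsub).trans_eq (Finset.card_range n₀)

lemma cesZero_finsetSum {ι : Type*} (s : Finset ι) (f : ι → ℕ → ℝ)
    (h : ∀ i ∈ s, CesZero (f i)) : CesZero (fun n => ∑ i ∈ s, f i n) := by
  classical
  induction s using Finset.induction with
  | empty => intro ε hε; filter_upwards with N; simp; positivity
  | @insert a t hx ih =>
    intro ε hε
    have h1 := h a (Finset.mem_insert_self a t) (ε / 2) (by positivity)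
    have h2 := ih (fun i hi => h i (Finset.mem_insert_of_mem hi)) (ε / 2) (by positivity)
    filter_upwards [h1, h2] with N hN1 hN2
    have : ∑ k ∈ Finset.Icc 1 N, (∑ i ∈ insert a t, f i k) =
        (∑ k ∈ Finset.Icc 1 N, f a k) + ∑ k ∈ Finset.Icc 1 N, (∑ i ∈ t, f i k) := by
      rw [← Finset.sum_add_distrib]
      apply Finset.sum_congr rfl
      intro k _
      rw [Finset.sum_insert hx]
    rw [this]; linarith

/-- Head sums are eventually negligible. -/
lemma eventually_head_le (c : ℝ) (ε : ℝ) (hε : 0 < ε) :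
    ∀ᶠ N : ℕ in atTop, c ≤ ε * N := by
  exact (Tendsto.const_mul_atTop hε tendsto_natCast_atTop_atTop).eventually_ge_atTop c

/-- Comparison with a head exception: if `f n ≤ g n` for `n ≥ n₀` and `f` is bounded. -/
lemma sum_Icc_le_of_eventually_le {f g : ℕ → ℝ} {B : ℝ} (hB : 0 ≤ B)
    (hfB : ∀ n, f n ≤ B) (hg0 : ∀ n, 0 ≤ g n) (n₀ : ℕ) (hn₀ : ∀ n ≥ n₀, f n ≤ g n) (N : ℕ) :
    (∑ k ∈ Finset.Icc 1 N, f k) ≤ (n₀ : ℝ) * B + ∑ k ∈ Finset.Icc 1 N, g k := by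
  have hpt : ∀ k ∈ Finset.Icc 1 N, f k ≤ (if k < n₀ then B else 0) + g k := by
    intro k _
    by_cases hk : k < n₀
    · simp only [hk, if_true]
      have := hfB k; have := hg0 k; linarith
    · simp only [hk, if_false, zero_add]
      exact hn₀ k (not_lt.mp hk)
  calc (∑ k ∈ Finset.Icc 1 N, f k)
      ≤ ∑ k ∈ Finset.Icc 1 N, ((if k < n₀ then B else 0) + g k) := Finset.sum_le_sum hpt
    _ = (∑ k ∈ Finset.Icc 1 N, (if k < n₀ then B else 0)) + ∑ k ∈ Finset.Icc 1 N, g k := by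
        rw [Finset.sum_add_distrib]
    _ ≤ (n₀ : ℝ) * B + ∑ k ∈ Finset.Icc 1 N, g k := by
        gcongr ?_ + _
        exact sum_ite_head_le n₀ N B hB

lemma indicator_compl_eq (S : Set ℕ) (k : ℕ) :
    Set.indicator Sᶜ (fun _ => (1:ℝ)) k = 1 - Set.indicator S (fun _ => (1:ℝ)) k := by
  by_cases hk : k ∈ S
  · simp [Set.indicator_of_mem hk, Set.indicator_of_notMem (by simp [hk] : k ∉ Sᶜ)]
  · simp [Set.indicator_of_notMem hk, Set.indicator_of_mem (by simp [hk] : k ∈ Sᶜ)]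

lemma hasDensity_one_iff_compl (S : Set ℕ) :
    HasDensity S 1 ↔ CesZero (fun n => Set.indicator Sᶜ (fun _ => (1:ℝ)) n) := by
  have hsum : ∀ N : ℕ, (∑ k ∈ Finset.Icc 1 N, Set.indicator Sᶜ (fun _ => (1:ℝ)) k)
      = N - ∑ k ∈ Finset.Icc 1 N, Set.indicator S (fun _ => (1:ℝ)) k := by
    intro N
    rw [Finset.sum_congr rfl (fun k _ => indicator_compl_eq S k), Finset.sum_sub_distrib]
    simp [Nat.card_Icc]
  constructor
  · intro hS
    apply cesZero_of_tendsto
    have : Tendsto (fun N : ℕ =>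
        (N - ∑ k ∈ Finset.Icc 1 N, Set.indicator S (fun _ => (1:ℝ)) k) / N) atTop (nhds 0) := by
      have h2 : Tendsto (fun N : ℕ => (N:ℝ)/N -
          (∑ k ∈ Finset.Icc 1 N, Set.indicator S (fun _ => (1:ℝ)) k) / N) atTop (nhds (1 - 1)) := by
        apply Tendsto.sub _ hS
        apply Tendsto.congr' _ tendsto_const_nhds
        filter_upwards [eventually_ge_atTop 1] with N hN
        have : (0:ℝ) < N := by exact_mod_cast hN
        field_simp
      simpa [sub_div] using h2
    apply this.congr
    intro N; rw [hsum N]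
  · intro hc
    have h0 : ∀ n, (0:ℝ) ≤ Set.indicator Sᶜ (fun _ => (1:ℝ)) n :=
      fun n => Set.indicator_nonneg (fun _ _ => zero_le_one) n
    have := cesZero_tendsto h0 hc
    unfold HasDensity
    have h2 : Tendsto (fun N : ℕ => (N:ℝ)/N -
        (∑ k ∈ Finset.Icc 1 N, Set.indicator Sᶜ (fun _ => (1:ℝ)) k) / N) atTop (nhds (1 - 0)) := by
      apply Tendsto.sub _ this
      apply Tendsto.congr' _ tendsto_const_nhds
      filter_upwards [eventually_ge_atTop 1] with N hN
      have : (0:ℝ) < N := by exact_mod_cast hN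
      field_simp
    have h3 : (fun N : ℕ => (N:ℝ)/N -
        (∑ k ∈ Finset.Icc 1 N, Set.indicator Sᶜ (fun _ => (1:ℝ)) k) / N) =
        (fun N : ℕ => (∑ k ∈ Finset.Icc 1 N, Set.indicator S (fun _ => (1:ℝ)) k) / N) := by
      funext N
      rw [hsum N, sub_div]
      ring
    rw [h3] at h2
    simpa using h2

/-- Koopman–von Neumann, easy direction. -/
lemma cesZero_of_density {S : Set ℕ} (hS : HasDensity S 1) {f : ℕ → ℝ} {B : ℝ}
    (h0 : ∀ n, 0 ≤ f n) (hB : ∀ n, f n ≤ B)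
    (hf : Tendsto f (atTop ⊓ Filter.principal S) (nhds 0)) : CesZero f := by
  have hBpos : 0 ≤ B := le_trans (h0 0) (hB 0)
  have hSc := (hasDensity_one_iff_compl S).mp hS
  intro ε hε
  have hf' : ∀ᶠ n in atTop, n ∈ S → |f n| < ε / 4 := by
    have := (Metric.tendsto_nhds.mp hf) (ε/4) (by positivity)
    rw [eventually_inf_principal] at this
    filter_upwards [this] with n hn hnS
    simpa [Real.dist_eq] using hn hnS
  obtain ⟨n₀, hn₀⟩ := eventually_atTop.mp hf'
  set g : ℕ → ℝ := fun n => ε/4 + B * Set.indicator Sᶜ (fun _ => (1:ℝ)) n with hg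
  have hind : ∀ n, (0:ℝ) ≤ Set.indicator Sᶜ (fun _ => (1:ℝ)) n :=
    fun n => Set.indicator_nonneg (fun _ _ => zero_le_one) n
  have hg0 : ∀ n, 0 ≤ g n := by intro n; have := hind n; simp only [hg]; positivity
  have hfg : ∀ n ≥ n₀, f n ≤ g n := by
    intro n hn
    by_cases hnS : n ∈ S
    · have := hn₀ n hn hnS
      have h4 : f n ≤ |f n| := le_abs_self _
      simp only [hg, Set.indicator_of_notMem (by simp [hnS] : n ∉ Sᶜ), mul_zero, add_zero]
      linarith
    · simp only [hg, Set.indicator_of_mem (by simp [hnS] : n ∈ Sᶜ), mul_one]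
      have := hB n; have := hind n; linarith
  have hBces := cesZero_const_mul B hBpos hSc
  filter_upwards [hBces (ε/4) (by positivity), eventually_head_le ((n₀:ℝ) * B) (ε/4) (by positivity),
    eventually_ge_atTop 1] with N h1 h2 hN1
  have hgsum : (∑ k ∈ Finset.Icc 1 N, g k) ≤ ε/4 * N + ε/4 * N := by
    have : (∑ k ∈ Finset.Icc 1 N, g k) = (∑ k ∈ Finset.Icc 1 N, (ε/4 : ℝ))
        + ∑ k ∈ Finset.Icc 1 N, B * Set.indicator Sᶜ (fun _ => (1:ℝ)) k := by
      simp only [hg]; rw [Finset.sum_add_distrib]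
    rw [this]
    have hconst : (∑ _k ∈ Finset.Icc 1 N, (ε/4:ℝ)) = ε/4 * N := by
      rw [Finset.sum_const, nsmul_eq_mul, Nat.card_Icc]; simp [mul_comm]
    rw [hconst]
    linarith [h1]
  have := sum_Icc_le_of_eventually_le hBpos hB hg0 n₀ hfg N
  calc (∑ k ∈ Finset.Icc 1 N, f k) ≤ (n₀ : ℝ) * B + ∑ k ∈ Finset.Icc 1 N, g k := this
    _ ≤ ε/4 * N + (ε/4 * N + ε/4 * N) := by linarith
    _ ≤ ε * N := by
        have : (0:ℝ) ≤ N := by positivity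
        nlinarith
/-- Koopman–von Neumann, hard direction: Cesàro convergence to zero gives convergence to
zero along a set of density one. -/
lemma density_of_cesZero {g : ℕ → ℝ} (h0 : ∀ n, 0 ≤ g n) (hces : CesZero g) :
    ∃ S : Set ℕ, HasDensity S 1 ∧ Tendsto g (atTop ⊓ Filter.principal S) (nhds 0) := by
  classical
  -- level sets
  set T : ℕ → Set ℕ := fun i => {n | 1 / ((i:ℝ)+1) < g n} with hT
  have hindT : ∀ i, CesZero (fun n => Set.indicator (T i) (fun _ => (1:ℝ)) n) := by
    intro i
    have hcomp := cesZero_const_mul ((i:ℝ)+1) (by positivity) hces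
    apply cesZero_mono (B := 1) (g := fun n => ((i:ℝ)+1) * g n)
    · intro n; exact Set.indicator_nonneg (fun _ _ => zero_le_one) n
    · intro n; by_cases hn : n ∈ T i
      · simp [Set.indicator_of_mem hn]
      · simp [Set.indicator_of_notMem hn]
    · intro n; have := h0 n; positivity
    · filter_upwards with n
      by_cases hn : n ∈ T i
      · rw [Set.indicator_of_mem hn]
        have : 1 / ((i:ℝ)+1) < g n := hn
        rw [div_lt_iff₀ (by positivity)] at this
        linarith [this]
      · rw [Set.indicator_of_notMem hn]
        have := h0 n; positivity
    · exact hcomp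
  -- partial sums of indicators
  have hsumT : ∀ j : ℕ, CesZero (fun n => ∑ i ∈ Finset.range (j+1),
      Set.indicator (T i) (fun _ => (1:ℝ)) n) :=
    fun j => cesZero_finsetSum _ _ (fun i _ => hindT i)
  -- choose thresholds
  have hchoice : ∀ j : ℕ, ∃ M : ℕ, ∀ N ≥ M, (∑ k ∈ Finset.Icc 1 N,
      ∑ i ∈ Finset.range (j+1), Set.indicator (T i) (fun _ => (1:ℝ)) k) ≤ (1/2:ℝ)^j * N :=
    fun j => eventually_atTop.mp (hsumT j ((1/2:ℝ)^j) (by positivity))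
  set ψ : ℕ → ℕ := fun j => max j (Classical.choose (hchoice j)) with hψdef
  have hψ : ∀ j, ∀ N ≥ ψ j, (∑ k ∈ Finset.Icc 1 N,
      ∑ i ∈ Finset.range (j+1), Set.indicator (T i) (fun _ => (1:ℝ)) k) ≤ (1/2:ℝ)^j * N := by
    intro j N hN
    exact Classical.choose_spec (hchoice j) N (le_trans (le_max_right _ _) hN)
  have hψj : ∀ j, j ≤ ψ j := fun j => le_max_left _ _
  set Bad : Set ℕ := ⋃ i, (T i ∩ Set.Ici (ψ i)) with hBad
  refine ⟨Badᶜ, ?_, ?_⟩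
  · rw [hasDensity_one_iff_compl, compl_compl]
    -- CesZero of indicator of Bad
    intro ε hε
    obtain ⟨J, hJ⟩ := exists_pow_lt_of_lt_one hε (by norm_num : (1/2:ℝ) < 1)
    filter_upwards [eventually_ge_atTop (ψ J)] with N hN
    set JN := Nat.findGreatest (fun j => ψ j ≤ N) N with hJN
    have hJle : J ≤ JN := Nat.le_findGreatest (le_trans (hψj J) hN) hN
    have hspec : ψ JN ≤ N := Nat.findGreatest_spec (P := fun j => ψ j ≤ N)
      (le_trans (hψj J) hN) hN
    have hpt : ∀ k ∈ Finset.Icc 1 N, Set.indicator Bad (fun _ => (1:ℝ)) k ≤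
        ∑ i ∈ Finset.range (JN+1), Set.indicator (T i) (fun _ => (1:ℝ)) k := by
      intro k hk
      simp only [Finset.mem_Icc] at hk
      by_cases hkB : k ∈ Bad
      · rw [Set.indicator_of_mem hkB]
        obtain ⟨i, hi⟩ : ∃ i, k ∈ T i ∩ Set.Ici (ψ i) := by
          simpa [hBad, Set.mem_iUnion] using hkB
        have hik : ψ i ≤ k := hi.2
        have hiN : i ≤ JN := Nat.le_findGreatest
          (le_trans (le_trans (hψj i) hik) hk.2) (le_trans hik hk.2)
        have hmem : i ∈ Finset.range (JN+1) := Finset.mem_range.mpr (Nat.lt_succ_of_le hiN)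
        calc (1:ℝ) = Set.indicator (T i) (fun _ => (1:ℝ)) k := by
              rw [Set.indicator_of_mem hi.1]
          _ ≤ ∑ i' ∈ Finset.range (JN+1), Set.indicator (T i') (fun _ => (1:ℝ)) k := by
              apply Finset.single_le_sum (f := fun i' =>
                Set.indicator (T i') (fun _ => (1:ℝ)) k) _ hmem
              intro i' _
              exact Set.indicator_nonneg (fun _ _ => zero_le_one) k
      · rw [Set.indicator_of_notMem hkB]
        apply Finset.sum_nonneg
        intro i' _
        exact Set.indicator_nonneg (fun _ _ => zero_le_one) k
    calc (∑ k ∈ Finset.Icc 1 N, Set.indicator Bad (fun _ => (1:ℝ)) k)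
        ≤ ∑ k ∈ Finset.Icc 1 N, ∑ i ∈ Finset.range (JN+1),
            Set.indicator (T i) (fun _ => (1:ℝ)) k := Finset.sum_le_sum hpt
      _ ≤ (1/2:ℝ)^JN * N := hψ JN N hspec
      _ ≤ (1/2:ℝ)^J * N := by
          apply mul_le_mul_of_nonneg_right _ (by positivity)
          exact pow_le_pow_of_le_one (by norm_num) (by norm_num) hJle
      _ ≤ ε * N := mul_le_mul_of_nonneg_right hJ.le (by positivity)
  · rw [Metric.tendsto_nhds]
    intro ε hε
    obtain ⟨i, hi⟩ := exists_nat_one_div_lt hε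
    rw [eventually_inf_principal]
    filter_upwards [eventually_ge_atTop (ψ i)] with n hn hnS
    have hnT : n ∉ T i := by
      intro hnT
      exact hnS (Set.mem_iUnion.mpr ⟨i, hnT, hn⟩)
    have : g n ≤ 1 / ((i:ℝ)+1) := not_lt.mp hnT
    rw [Real.dist_eq, sub_zero, abs_of_nonneg (h0 n)]
    calc g n ≤ 1 / ((i:ℝ)+1) := this
      _ < ε := hi

/-- Countable diagonal version: a common density-one set for countably many
Cesàro-null sequences. -/
lemma exists_density_set (f : ℕ → ℕ → ℝ) (h0 : ∀ j n, 0 ≤ f j n)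
    (hces : ∀ j, CesZero (f j)) :
    ∃ S : Set ℕ, HasDensity S 1 ∧ ∀ j, Tendsto (f j) (atTop ⊓ Filter.principal S) (nhds 0) := by
  classical
  set m : ℕ → ℕ → ℝ := fun j n => min (f j n) 1 with hm
  have hm0 : ∀ j n, 0 ≤ m j n := fun j n => le_min (h0 j n) zero_le_one
  have hm1 : ∀ j n, m j n ≤ 1 := fun j n => min_le_right _ _
  have hmces : ∀ j, CesZero (m j) := by
    intro j
    apply cesZero_mono (B := 1) (hf0 := hm0 j) (hfB := hm1 j) (hg0 := h0 j) _ (hces j)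
    filter_upwards with n; exact min_le_left _ _
  set g : ℕ → ℝ := fun n => ∑ j ∈ Finset.range (n+1), (1/2:ℝ)^j * m j n with hg
  have hg0 : ∀ n, 0 ≤ g n := by
    intro n; apply Finset.sum_nonneg; intro j _
    have := hm0 j n; positivity
  have hgces : CesZero g := by
    intro ε hε
    obtain ⟨J, hJ⟩ := exists_pow_lt_of_lt_one (show (0:ℝ) < ε/4 by positivity)
      (by norm_num : (1/2:ℝ) < 1)
    -- head: finitely many j ≤ J, each CesZero; tail: bounded by (1/2)^J * 2 * N
    have hheadces : CesZero (fun n => ∑ j ∈ Finset.range (J+1), (1/2:ℝ)^j * m j n) :=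
      cesZero_finsetSum _ _ (fun j _ => cesZero_const_mul _ (by positivity) (hmces j))
    filter_upwards [hheadces (ε/2) (by positivity)] with N h1
    have hpt : ∀ n, g n ≤ (∑ j ∈ Finset.range (J+1), (1/2:ℝ)^j * m j n) + (1/2:ℝ)^J * 2 := by
      intro n
      by_cases hn : n + 1 ≤ J + 1
      · have hsub : Finset.range (n+1) ⊆ Finset.range (J+1) := Finset.range_subset_range.mpr hn
        have : g n ≤ ∑ j ∈ Finset.range (J+1), (1/2:ℝ)^j * m j n := by
          apply Finset.sum_le_sum_of_subset_of_nonneg hsub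
          intro j _ _; have := hm0 j n; positivity
        have htail : (0:ℝ) ≤ (1/2:ℝ)^J * 2 := by positivity
        linarith
      · push_neg at hn
        have hsplit : (∑ j ∈ Finset.range (n+1), (1/2:ℝ)^j * m j n)
            = (∑ j ∈ Finset.range (J+1), (1/2:ℝ)^j * m j n)
              + ∑ j ∈ Finset.Ico (J+1) (n+1), (1/2:ℝ)^j * m j n := by
          simp only [Finset.range_eq_Ico]
          exact (Finset.sum_Ico_consecutive _ (Nat.zero_le (J+1)) hn.le).symm
        have htail : (∑ j ∈ Finset.Ico (J+1) (n+1), (1/2:ℝ)^j * m j n) ≤ (1/2:ℝ)^J * 2 := by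
          calc (∑ j ∈ Finset.Ico (J+1) (n+1), (1/2:ℝ)^j * m j n)
              ≤ ∑ j ∈ Finset.Ico (J+1) (n+1), (1/2:ℝ)^j := by
                apply Finset.sum_le_sum
                intro j _
                have h1 := hm1 j n; have h2 := hm0 j n
                nlinarith [pow_pos (show (0:ℝ) < 1/2 by norm_num) j]
            _ ≤ (1/2:ℝ)^(J+1) / (1 - 1/2) :=
                geom_sum_Ico_le_of_lt_one (show (0:ℝ) ≤ 1/2 by norm_num)
                  (show (1/2:ℝ) < 1 by norm_num)
            _ = (1/2:ℝ)^J := by rw [pow_succ]; ring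
            _ ≤ (1/2:ℝ)^J * 2 := by nlinarith [pow_pos (show (0:ℝ)<1/2 by norm_num) J]
        have : g n = (∑ j ∈ Finset.range (n+1), (1/2:ℝ)^j * m j n) := rfl
        rw [this, hsplit]
        linarith
    calc (∑ k ∈ Finset.Icc 1 N, g k)
        ≤ ∑ k ∈ Finset.Icc 1 N, ((∑ j ∈ Finset.range (J+1), (1/2:ℝ)^j * m j k) + (1/2:ℝ)^J * 2) :=
          Finset.sum_le_sum (fun k _ => hpt k)
      _ = (∑ k ∈ Finset.Icc 1 N, ∑ j ∈ Finset.range (J+1), (1/2:ℝ)^j * m j k)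
          + (N:ℝ) * ((1/2:ℝ)^J * 2) := by
          rw [Finset.sum_add_distrib, Finset.sum_const, nsmul_eq_mul, Nat.card_Icc]
          simp
      _ ≤ ε/2 * N + (N:ℝ) * (ε/4 * 2) := by
          have hN0 : (0:ℝ) ≤ N := Nat.cast_nonneg N
          have h2 : (N:ℝ) * ((1/2:ℝ)^J * 2) ≤ (N:ℝ) * (ε/4 * 2) := by nlinarith [hJ.le]
          linarith
      _ = ε * N := by ring
  obtain ⟨S, hS, hgS⟩ := density_of_cesZero hg0 hgces
  refine ⟨S, hS, ?_⟩
  intro j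
  rw [Metric.tendsto_nhds]
  intro ε hε
  set ε' := min ε 1 with hε'
  have hε'pos : 0 < ε' := lt_min hε one_pos
  have hev := (Metric.tendsto_nhds.mp hgS) ((1/2:ℝ)^j * ε' / 2) (by positivity)
  rw [eventually_inf_principal] at hev ⊢
  filter_upwards [hev, eventually_ge_atTop j] with n h1 h2 hnS
  have hgn := h1 hnS
  rw [Real.dist_eq, sub_zero, abs_of_nonneg (hg0 n)] at hgn
  have hterm : (1/2:ℝ)^j * m j n ≤ g n := by
    apply Finset.single_le_sum (f := fun j' => (1/2:ℝ)^j' * m j' n) _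
      (Finset.mem_range.mpr (Nat.lt_succ_of_le h2))
    intro j' _; have := hm0 j' n; positivity
  have hmlt : m j n < ε' := by
    have hp : (0:ℝ) < (1/2:ℝ)^j := by positivity
    nlinarith
  have : f j n < ε' := by
    rcases le_or_gt (f j n) 1 with hc | hc
    · have he : m j n = f j n := min_eq_left hc
      rwa [he] at hmlt
    · have he : m j n = 1 := min_eq_right hc.le
      rw [he] at hmlt
      have : ε' ≤ 1 := min_le_right _ _
      linarith
  rw [Real.dist_eq, sub_zero, abs_of_nonneg (h0 j n)]
  exact lt_of_lt_of_le this (min_le_left _ _)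
/-! ### Polynomial lemmas -/

lemma eval01 (s : Polynomial ℤ) (h : s.natDegree ≤ 1) (a : ℤ) :
    s.eval a = s.coeff 0 + s.coeff 1 * a := by
  have h2 : s.natDegree < 2 := lt_of_le_of_lt h one_lt_two
  rw [Polynomial.eval_eq_sum_range' h2]
  rw [Finset.sum_range_succ, Finset.sum_range_succ, Finset.sum_range_zero]
  simp [pow_one]

lemma eventually_le_eval {q : Polynomial ℤ} (h1 : 1 ≤ q.natDegree) (h2 : 0 < q.leadingCoeff)
    (c : ℤ) : ∀ᶠ n : ℕ in atTop, c ≤ q.eval (n : ℤ) := by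
  set Q : Polynomial ℝ := q.map (Int.castRingHom ℝ) with hQ
  have hcast : Function.Injective (Int.castRingHom ℝ) := Int.cast_injective
  have hdeg : 0 < Q.degree := by
    rw [Polynomial.degree_map_eq_of_injective hcast]
    exact Polynomial.natDegree_pos_iff_degree_pos.mp h1
  have hlead : 0 ≤ Q.leadingCoeff := by
    rw [Polynomial.leadingCoeff_map_of_injective hcast]
    simp only [Int.coe_castRingHom]
    exact_mod_cast h2.le
  have ht : Tendsto (fun x : ℝ => Q.eval x) atTop atTop :=
    Q.tendsto_atTop_of_leadingCoeff_nonneg hdeg hlead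
  have ht2 : Tendsto (fun n : ℕ => Q.eval (n : ℝ)) atTop atTop :=
    ht.comp tendsto_natCast_atTop_atTop
  have heval : ∀ n : ℕ, Q.eval (n : ℝ) = ((q.eval (n : ℤ) : ℤ) : ℝ) := by
    intro n
    rw [hQ, Polynomial.eval_map]
    have : ((n : ℕ) : ℝ) = (Int.castRingHom ℝ) ((n : ℕ) : ℤ) := by push_cast; rfl
    rw [this, Polynomial.eval₂_hom]
    rfl
  have := ht2.eventually_ge_atTop ((c : ℤ) : ℝ)
  filter_upwards [this] with n hn
  rw [heval n] at hn
  exact_mod_cast hn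

lemma leadingCoeff_pos_of_nonneg {p : Polynomial ℤ} (h1 : 1 ≤ p.natDegree)
    (hp : ∀ n : ℕ, 0 < n → 0 ≤ p.eval (n : ℤ)) : 0 < p.leadingCoeff := by
  rcases lt_trichotomy 0 p.leadingCoeff with h | h | h
  · exact h
  · exfalso
    have : p = 0 := Polynomial.leadingCoeff_eq_zero.mp h.symm
    rw [this] at h1; simp at h1
  · exfalso
    have hneg : 0 < (-p).leadingCoeff := by
      rw [Polynomial.leadingCoeff_neg]; linarith
    have hdeg : 1 ≤ (-p).natDegree := by rwa [Polynomial.natDegree_neg]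
    have := eventually_le_eval hdeg hneg 1
    obtain ⟨n₀, hn₀⟩ := eventually_atTop.mp this
    have h2 := hn₀ (max n₀ 1) (le_max_left _ _)
    rw [Polynomial.eval_neg] at h2
    have h3 := hp (max n₀ 1) (lt_of_lt_of_le one_pos (le_max_right n₀ 1))
    omega

lemma taylor_diff {q : Polynomial ℤ} {D : ℕ} (hD : q.natDegree = D) (hD2 : 2 ≤ D)
    (hq : 0 < q.leadingCoeff) {m m' : ℕ} (hmm : m' < m) :
    (Polynomial.taylor (m:ℤ) q - Polynomial.taylor (m':ℤ) q).natDegree = D - 1 ∧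
    0 < (Polynomial.taylor (m:ℤ) q - Polynomial.taylor (m':ℤ) q).leadingCoeff := by
  set r := Polynomial.taylor (m:ℤ) q - Polynomial.taylor (m':ℤ) q with hr
  have hcoeff : ∀ k, r.coeff k = (Polynomial.hasseDeriv k q).eval (m:ℤ)
      - (Polynomial.hasseDeriv k q).eval (m':ℤ) := by
    intro k
    rw [hr, Polynomial.coeff_sub, Polynomial.taylor_coeff, Polynomial.taylor_coeff]
  -- hasseDeriv k q has small degree
  have hhd : ∀ k, D - 1 ≤ k → (Polynomial.hasseDeriv k q).natDegree ≤ 1 := by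
    intro k hk
    rw [Polynomial.natDegree_le_iff_coeff_eq_zero]
    intro N hN
    rw [Polynomial.hasseDeriv_coeff]
    have : q.natDegree < N + k := by omega
    rw [Polynomial.coeff_eq_zero_of_natDegree_lt this, mul_zero]
  have hcoeff2 : ∀ k, D - 1 ≤ k →
      r.coeff k = (Polynomial.hasseDeriv k q).coeff 1 * ((m:ℤ) - (m':ℤ)) := by
    intro k hk
    rw [hcoeff k, eval01 _ (hhd k hk), eval01 _ (hhd k hk)]
    ring
  have hzero : ∀ k, D ≤ k → r.coeff k = 0 := by
    intro k hk
    rw [hcoeff2 k (by omega), Polynomial.hasseDeriv_coeff]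
    have : q.natDegree < 1 + k := by omega
    rw [Polynomial.coeff_eq_zero_of_natDegree_lt this]
    ring
  have hlead : r.coeff (D-1) = (D : ℤ) * q.leadingCoeff * ((m:ℤ) - (m':ℤ)) := by
    rw [hcoeff2 (D-1) le_rfl, Polynomial.hasseDeriv_coeff]
    have h1 : 1 + (D - 1) = D := by omega
    rw [h1]
    have h2 : D.choose (D-1) = D := by
      have := Nat.choose_symm (show 1 ≤ D by omega) (n := D)
      simpa [Nat.choose_one_right] using this
    rw [h2, Polynomial.leadingCoeff, hD]
  have hmm' : (0:ℤ) < (m:ℤ) - (m':ℤ) := by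
    have : (m' : ℤ) < (m : ℤ) := by exact_mod_cast hmm
    linarith
  have hlpos : 0 < r.coeff (D-1) := by
    rw [hlead]
    have hD0 : (0:ℤ) < (D:ℤ) := by exact_mod_cast (by omega : 0 < D)
    positivity
  have hndeg : r.natDegree = D - 1 := by
    apply le_antisymm
    · rw [Polynomial.natDegree_le_iff_coeff_eq_zero]
      intro N hN
      exact hzero N (by omega)
    · exact Polynomial.le_natDegree_of_ne_zero (ne_of_gt hlpos)
  constructor
  · exact hndeg
  · rw [Polynomial.leadingCoeff, hndeg]
    exact hlpos

/-! ### Operator lemmas -/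

section Op

variable {H : Type*} [NormedAddCommGroup H] [InnerProductSpace ℂ H]
variable {U : H →L[ℂ] H}

lemma inner_U_map (hiso : ∀ x : H, ‖U x‖ = ‖x‖) (z w : H) : ⟪U z, U w⟫_ℂ = ⟪z, w⟫_ℂ := by
  let Ui : H →ₗᵢ[ℂ] H := ⟨(U : H →ₗ[ℂ] H), hiso⟩
  exact Ui.inner_map_map z w

lemma inner_U_pow (hiso : ∀ x : H, ‖U x‖ = ‖x‖) (n : ℕ) : ∀ z w : H,
    ⟪(U^n) z, (U^n) w⟫_ℂ = ⟪z, w⟫_ℂ := by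
  induction n with
  | zero => intro z w; simp
  | succ k ih =>
    intro z w
    have h1 : ∀ v : H, (U^(k+1)) v = (U^k) (U v) := by
      intro v; rw [pow_succ]; rfl
    rw [h1 z, h1 w, ih (U z) (U w)]
    exact inner_U_map hiso z w

lemma norm_U_pow (hiso : ∀ x : H, ‖U x‖ = ‖x‖) (n : ℕ) : ∀ x : H, ‖(U^n) x‖ = ‖x‖ := by
  induction n with
  | zero => intro x; simp
  | succ k ih =>
    intro x
    have h1 : (U^(k+1)) x = (U^k) (U x) := by rw [pow_succ]; rfl
    rw [h1, ih (U x), hiso x]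

lemma inner_U_shift (hiso : ∀ x : H, ‖U x‖ = ‖x‖) {a b : ℕ} (hab : b ≤ a) (z w : H) :
    ⟪(U^a) z, (U^b) w⟫_ℂ = ⟪(U^(a-b)) z, w⟫_ℂ := by
  obtain ⟨c, rfl⟩ : ∃ c, a = b + c := ⟨a - b, by omega⟩
  have h3 : b + c - b = c := by omega
  have h2 : (U^(b+c)) z = (U^b) ((U^c) z) := by rw [pow_add]; rfl
  rw [h3, h2, inner_U_pow hiso b]

end Op
/-! ### Cesàro along affine sequences -/

lemma cesZero_comp_affine {g : ℕ → ℝ} {B : ℝ} (hg0 : ∀ k, 0 ≤ g k) (hgB : ∀ k, g k ≤ B)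
    (hces : CesZero g) (a : ℕ) (ha : 1 ≤ a) (b : ℤ) :
    CesZero (fun n : ℕ => g (((a:ℤ) * (n:ℤ) + b).toNat)) := by
  have hB : 0 ≤ B := le_trans (hg0 0) (hgB 0)
  intro ε hε
  set c : ℕ := a + b.natAbs + 1 with hc
  have hcpos : (0:ℝ) < c := by positivity
  set ε' : ℝ := ε / (2 * c) with hε'
  have hε'pos : 0 < ε' := by positivity
  obtain ⟨M₀, hM₀⟩ := eventually_atTop.mp (hces ε' hε'pos)
  set n₀ : ℕ := b.natAbs + 1 with hn₀def
  have hkey : ∀ n : ℕ, n₀ ≤ n → 1 ≤ (a:ℤ) * n + b := by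
    intro n hn
    have h1 : (n:ℤ) ≤ (a:ℤ) * n := by
      have : (1:ℤ) ≤ (a:ℤ) := by exact_mod_cast ha
      nlinarith [Int.ofNat_nonneg n]
    have h2 : -(b.natAbs : ℤ) ≤ b := by
      have := neg_abs_le b; rwa [Int.abs_eq_natAbs] at this
    have h3 : (b.natAbs : ℤ) + 1 ≤ (n:ℤ) := by exact_mod_cast hn
    linarith
  filter_upwards [eventually_head_le ((n₀:ℝ) * B) (ε/2) (by positivity),
    eventually_ge_atTop (M₀ + b.natAbs + n₀ + 1)] with N hhead hN
  have hNn₀ : n₀ ≤ N := by omega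
  have hN1 : 1 ≤ N := by omega
  -- split the sum
  have hsplit : (∑ n ∈ Finset.Icc 1 N, g (((a:ℤ) * n + b).toNat))
      = (∑ n ∈ Finset.Ioc 0 (n₀-1), g (((a:ℤ) * n + b).toNat))
        + ∑ n ∈ Finset.Ioc (n₀-1) N, g (((a:ℤ) * n + b).toNat) := by
    rw [show Finset.Icc 1 N = Finset.Ioc 0 N from (Finset.Icc_add_one_left_eq_Ioc 0 N)]
    exact (Finset.sum_Ioc_consecutive _ (Nat.zero_le _) (by omega)).symm
  set M : ℕ := ((a:ℤ) * N + b).toNat with hM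
  have hMge : M₀ ≤ M := by
    have h1 : (M₀ : ℤ) ≤ (a:ℤ)*N + b := by
      have h2 : -(b.natAbs:ℤ) ≤ b := by
        have := neg_abs_le b; rwa [Int.abs_eq_natAbs] at this
      have h3 : (N:ℤ) ≤ (a:ℤ)*N := by
        have : (1:ℤ) ≤ (a:ℤ) := by exact_mod_cast ha
        nlinarith [Int.ofNat_nonneg N]
      have h4 : (M₀:ℤ) + b.natAbs + n₀ + 1 ≤ (N:ℤ) := by exact_mod_cast hN
      omega
    omega
  have hMle : M ≤ (a + b.natAbs) * N := by
    have h1 : (a:ℤ)*N + b ≤ (a:ℤ)*N + b.natAbs := by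
      have := Int.le_natAbs (a := b); omega
    have h2 : M ≤ a*N + b.natAbs := by
      have h3 := Int.toNat_le_toNat h1
      rwa [show ((a:ℤ)*(N:ℤ) + ((b.natAbs:ℕ):ℤ)) = (((a*N + b.natAbs : ℕ)):ℤ) by push_cast; ring,
        Int.toNat_natCast] at h3
    calc M ≤ a*N + b.natAbs := h2
      _ ≤ a*N + b.natAbs * N := by
          have : b.natAbs ≤ b.natAbs * N := Nat.le_mul_of_pos_right _ (by omega)
          omega
      _ = (a + b.natAbs) * N := by ring
  -- head bound
  have hheadb : (∑ n ∈ Finset.Ioc 0 (n₀-1), g (((a:ℤ) * n + b).toNat)) ≤ (n₀:ℝ) * B := by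
    calc (∑ n ∈ Finset.Ioc 0 (n₀-1), g (((a:ℤ) * n + b).toNat))
        ≤ ∑ _n ∈ Finset.Ioc 0 (n₀-1), B := Finset.sum_le_sum (fun n _ => hgB _)
      _ = ((n₀-1 : ℕ):ℝ) * B := by rw [Finset.sum_const, nsmul_eq_mul, Nat.card_Ioc]; simp
      _ ≤ (n₀:ℝ) * B := by
          apply mul_le_mul_of_nonneg_right _ hB
          exact_mod_cast Nat.sub_le n₀ 1
  -- tail bound via injective reindexing
  set φ : ℕ → ℕ := fun n => ((a:ℤ) * n + b).toNat with hφ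
  have hinj : ∀ n ∈ Finset.Ioc (n₀-1) N, ∀ n' ∈ Finset.Ioc (n₀-1) N, φ n = φ n' → n = n' := by
    intro n hn n' hn' hee
    simp only [Finset.mem_Ioc] at hn hn'
    have h1 : 1 ≤ (a:ℤ)*n + b := hkey n (by omega)
    have h2 : 1 ≤ (a:ℤ)*n' + b := hkey n' (by omega)
    have h3 : (a:ℤ)*n + b = (a:ℤ)*n' + b := by
      have e1 := Int.toNat_of_nonneg (by omega : (0:ℤ) ≤ (a:ℤ)*n + b)
      have e2 := Int.toNat_of_nonneg (by omega : (0:ℤ) ≤ (a:ℤ)*n' + b)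
      rw [← e1, ← e2]
      exact_mod_cast congrArg (fun t : ℕ => (t:ℤ)) hee
    have h4 : (a:ℤ) * n = (a:ℤ) * n' := by omega
    have h5 : (n:ℤ) = (n':ℤ) := by
      apply mul_left_cancel₀ (show (a:ℤ) ≠ 0 by exact_mod_cast Nat.one_le_iff_ne_zero.mp ha) h4
    exact_mod_cast h5
  have himg : ∀ n ∈ Finset.Ioc (n₀-1) N, φ n ∈ Finset.Icc 1 M := by
    intro n hn
    simp only [Finset.mem_Ioc] at hn
    simp only [Finset.mem_Icc]
    constructor
    · have h1 : 1 ≤ (a:ℤ)*n + b := hkey n (by omega)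
      show 1 ≤ ((a:ℤ)*n + b).toNat
      omega
    · show ((a:ℤ)*n + b).toNat ≤ ((a:ℤ)*N + b).toNat
      apply Int.toNat_le_toNat
      have : (n:ℤ) ≤ (N:ℤ) := by exact_mod_cast hn.2
      have ha' : (0:ℤ) ≤ (a:ℤ) := by positivity
      nlinarith
  have htail : (∑ n ∈ Finset.Ioc (n₀-1) N, g (φ n)) ≤ ∑ k ∈ Finset.Icc 1 M, g k := by
    rw [← Finset.sum_image hinj]
    apply Finset.sum_le_sum_of_subset_of_nonneg
    · intro k hk
      obtain ⟨n, hn, rfl⟩ := Finset.mem_image.mp hk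
      exact himg n hn
    · intro k _ _; exact hg0 k
  have htail2 : (∑ k ∈ Finset.Icc 1 M, g k) ≤ ε' * M := hM₀ M hMge
  have hMreal : (M:ℝ) ≤ ((a + b.natAbs : ℕ) : ℝ) * N := by exact_mod_cast hMle
  calc (∑ n ∈ Finset.Icc 1 N, g (((a:ℤ) * n + b).toNat))
      ≤ (n₀:ℝ) * B + ε' * M := by rw [hsplit]; exact add_le_add hheadb (htail.trans htail2)
    _ ≤ ε/2 * N + ε' * (((a + b.natAbs:ℕ)) * N) := by
        apply add_le_add hhead
        apply mul_le_mul_of_nonneg_left hMreal hε'pos.le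
    _ ≤ ε/2 * N + ε/2 * N := by
        apply add_le_add le_rfl
        have hle : ((a + b.natAbs:ℕ):ℝ) ≤ (c:ℝ) := by
          rw [hc]; push_cast; linarith
        have hN0 : (0:ℝ) ≤ N := Nat.cast_nonneg N
        have : ε' * (((a + b.natAbs:ℕ)) * N) ≤ ε' * ((c:ℝ) * N) := by
          apply mul_le_mul_of_nonneg_left _ hε'pos.le
          exact mul_le_mul_of_nonneg_right hle hN0
        rw [hε'] at this ⊢
        calc ε / (2*c) * (((a + b.natAbs:ℕ)) * N) ≤ ε / (2*c) * ((c:ℝ) * N) := this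
          _ = ε/2 * N := by field_simp
    _ = ε * N := by ring
/-! ### Base case of the induction -/

section Main

variable {H : Type*} [NormedAddCommGroup H] [InnerProductSpace ℂ H]
variable {U : H →L[ℂ] H}

lemma key_base (hiso : ∀ x : H, ‖U x‖ = ‖x‖)
    (haws : ∀ x : H, ∃ S : Set ℕ, HasDensity S 1 ∧
      ∀ y : H, Tendsto (fun n : ℕ => ⟪y, (U ^ n) x⟫_ℂ) (atTop ⊓ Filter.principal S) (nhds 0))
    {q : Polynomial ℤ} (h1 : q.natDegree = 1) (hq : 0 < q.leadingCoeff) (x y : H) :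
    CesZero (fun n : ℕ => ‖⟪y, (U ^ ((q.eval (n:ℤ)).toNat)) x⟫_ℂ‖) := by
  obtain ⟨S, hS, hconv⟩ := haws x
  set g : ℕ → ℝ := fun k => ‖⟪y, (U ^ k) x⟫_ℂ‖ with hg
  have hg0 : ∀ k, 0 ≤ g k := fun k => norm_nonneg _
  have hgB : ∀ k, g k ≤ ‖y‖ * ‖x‖ := by
    intro k
    calc g k ≤ ‖y‖ * ‖(U^k) x‖ := norm_inner_le_norm _ _
      _ = ‖y‖ * ‖x‖ := by rw [norm_U_pow hiso k x]
  have htend : Tendsto g (atTop ⊓ Filter.principal S) (nhds 0) := by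
    have h2 := (hconv y).norm
    simpa only [norm_zero] using h2
  have hces := cesZero_of_density hS hg0 hgB htend
  set a : ℕ := (q.coeff 1).toNat with hadef
  have hc1 : q.coeff 1 = q.leadingCoeff := by rw [Polynomial.leadingCoeff, h1]
  have ha : 1 ≤ a := by rw [hadef, hc1]; omega
  have hacast : (a:ℤ) = q.coeff 1 := by rw [hadef, hc1]; omega
  have haff := cesZero_comp_affine hg0 hgB hces a ha (q.coeff 0)
  have hfun : (fun n : ℕ => g (((a:ℤ) * (n:ℤ) + q.coeff 0).toNat))
      = (fun n : ℕ => ‖⟪y, (U ^ ((q.eval (n:ℤ)).toNat)) x⟫_ℂ‖) := by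
    funext n
    have heq : (q.eval (n:ℤ)).toNat = ((a:ℤ) * n + q.coeff 0).toNat := by
      rw [eval01 q (le_of_eq h1) n, hacast]
      congr 1
      ring
    rw [← heq]
  rw [← hfun]
  exact haff

end Main
section Step

variable {H : Type*} [NormedAddCommGroup H] [InnerProductSpace ℂ H]
variable {U : H →L[ℂ] H}

set_option maxHeartbeats 2000000 in
lemma key_step (hiso : ∀ x : H, ‖U x‖ = ‖x‖) {q : Polynomial ℤ} {d : ℕ} (hd : 1 ≤ d)
    (hdeg : q.natDegree = d + 1) (hq : 0 < q.leadingCoeff)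
    (IH : ∀ r : Polynomial ℤ, 1 ≤ r.natDegree → r.natDegree ≤ d → 0 < r.leadingCoeff →
      ∀ z u : H, CesZero (fun n : ℕ => ‖⟪u, (U ^ ((r.eval (n:ℤ)).toNat)) z⟫_ℂ‖))
    (x y : H) : CesZero (fun n : ℕ => ‖⟪y, (U ^ ((q.eval (n:ℤ)).toNat)) x⟫_ℂ‖) := by
  classical
  set e : ℕ → ℕ := fun n => (q.eval (n:ℤ)).toNat with he
  set c : ℕ → ℂ := fun n => ⟪y, (U ^ (e n)) x⟫_ℂ with hc
  set w : ℕ → H := fun n => (starRingEnd ℂ) (c n) • ((U ^ (e n)) x) with hw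
  set Cy : ℝ := ‖y‖ * ‖x‖ + 1 with hCy
  have hCy1 : 1 ≤ Cy := by
    have : (0:ℝ) ≤ ‖y‖ * ‖x‖ := by positivity
    rw [hCy]; linarith
  have hCy0 : 0 < Cy := lt_of_lt_of_le one_pos hCy1
  have hcB : ∀ n, ‖c n‖ ≤ Cy := by
    intro n
    calc ‖c n‖ ≤ ‖y‖ * ‖(U ^ (e n)) x‖ := norm_inner_le_norm _ _
      _ = ‖y‖ * ‖x‖ := by rw [norm_U_pow hiso]
      _ ≤ Cy := by rw [hCy]; linarith
  set W : ℝ := Cy * (‖x‖ + 1) with hW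
  have hW1 : 1 ≤ W := by
    rw [hW]
    have h1 : (0:ℝ) ≤ ‖x‖ := norm_nonneg x
    nlinarith
  have hW0 : 0 < W := lt_of_lt_of_le one_pos hW1
  have hwB : ∀ n, ‖w n‖ ≤ W := by
    intro n
    rw [hw]; simp only
    rw [norm_smul, RCLike.norm_conj]
    calc ‖c n‖ * ‖(U^(e n)) x‖ = ‖c n‖ * ‖x‖ := by rw [norm_U_pow hiso]
      _ ≤ Cy * (‖x‖+1) := by
          apply mul_le_mul (hcB n) (by linarith [norm_nonneg x]) (norm_nonneg x) hCy0.le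
  -- norm of inner products of shifted `w`s is Cesàro-null, for distinct shifts
  have hpair : ∀ m m' : ℕ, m' < m →
      CesZero (fun n => ‖⟪w (n + m), w (n + m')⟫_ℂ‖) := by
    intro m m' hmm'
    set r : Polynomial ℤ := Polynomial.taylor (m:ℤ) q - Polynomial.taylor (m':ℤ) q with hrdef
    obtain ⟨hr1, hr2⟩ := taylor_diff hdeg (by omega) hq hmm'
    have hrd : r.natDegree = d := by rw [hr1]; omega
    have hIH := IH r (by omega) (by omega) hr2 x x
    obtain ⟨k₀, hk₀⟩ := eventually_atTop.mp
      (eventually_le_eval (by omega : 1 ≤ q.natDegree) hq 0)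
    obtain ⟨k₁, hk₁⟩ := eventually_atTop.mp
      (eventually_le_eval (show 1 ≤ r.natDegree by omega) hr2 0)
    apply cesZero_mono (B := W * W)
      (g := fun n => (Cy * Cy) * ‖⟪x, (U ^ ((r.eval (n:ℤ)).toNat)) x⟫_ℂ‖)
    · intro n; exact norm_nonneg _
    · intro n
      calc ‖⟪w (n+m), w (n+m')⟫_ℂ‖ ≤ ‖w (n+m)‖ * ‖w (n+m')‖ := norm_inner_le_norm _ _
        _ ≤ W * W := mul_le_mul (hwB _) (hwB _) (norm_nonneg _) hW0.le
    · intro n; positivity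
    · filter_upwards [eventually_ge_atTop (max k₀ k₁)] with n hn
      have h0 : 0 ≤ q.eval ((n+m' : ℕ):ℤ) :=
        hk₀ _ (le_trans (le_trans (le_max_left _ _) hn) (Nat.le_add_right _ _))
      have h1 : 0 ≤ r.eval (n:ℤ) := hk₁ n (le_trans (le_max_right _ _) hn)
      have heval : q.eval ((n+m:ℕ):ℤ) = q.eval ((n+m':ℕ):ℤ) + r.eval (n:ℤ) := by
        rw [hrdef]
        rw [Polynomial.eval_sub, Polynomial.taylor_eval, Polynomial.taylor_eval]
        push_cast
        ring
      have hee : e (n+m) = e (n+m') + (r.eval (n:ℤ)).toNat := by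
        show (q.eval ((n+m:ℕ):ℤ)).toNat = (q.eval ((n+m':ℕ):ℤ)).toNat + (r.eval (n:ℤ)).toNat
        omega
      have hle : e (n+m') ≤ e (n+m) := by omega
      set t : ℕ := (r.eval (n:ℤ)).toNat with ht
      have hinner : ⟪(U ^ (e (n+m))) x, (U ^ (e (n+m'))) x⟫_ℂ = ⟪(U ^ t) x, x⟫_ℂ := by
        rw [inner_U_shift hiso hle x x]
        have : e (n+m) - e (n+m') = t := by omega
        rw [this]
      have hwinner : ⟪w (n+m), w (n+m')⟫_ℂ
          = (c (n+m)) * ((starRingEnd ℂ) (c (n+m')) * ⟪(U ^ t) x, x⟫_ℂ) := by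
        rw [hw]; simp only
        rw [inner_smul_left, inner_smul_right, starRingEnd_self_apply, hinner]
      have hswapn : ‖⟪(U ^ t) x, x⟫_ℂ‖ = ‖⟪x, (U ^ t) x⟫_ℂ‖ := by
        rw [← inner_conj_symm ((U^t) x) x, RCLike.norm_conj]
      calc ‖⟪w (n+m), w (n+m')⟫_ℂ‖
          = ‖c (n+m)‖ * (‖c (n+m')‖ * ‖⟪x, (U ^ t) x⟫_ℂ‖) := by
            rw [hwinner, norm_mul, norm_mul, RCLike.norm_conj, hswapn]
        _ ≤ Cy * (Cy * ‖⟪x, (U ^ t) x⟫_ℂ‖) := by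
            apply mul_le_mul (hcB _) _ (by positivity) hCy0.le
            apply mul_le_mul (hcB _) le_rfl (norm_nonneg _) hCy0.le
        _ = (Cy * Cy) * ‖⟪x, (U ^ ((r.eval (n:ℤ)).toNat)) x⟫_ℂ‖ := by rw [← ht]; ring
    · exact cesZero_const_mul _ (by positivity) hIH
  have hpair2 : ∀ m m' : ℕ, m ≠ m' → CesZero (fun n => ‖⟪w (n + m), w (n + m')⟫_ℂ‖) := by
    intro m m' hne
    rcases lt_or_gt_of_ne hne with hlt | hgt
    · have hsymm : (fun n => ‖⟪w (n + m), w (n + m')⟫_ℂ‖)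
          = (fun n => ‖⟪w (n + m'), w (n + m)⟫_ℂ‖) := by
        funext n
        rw [← inner_conj_symm (w (n+m)) (w (n+m')), RCLike.norm_conj]
      rw [hsymm]
      exact hpair m' m hlt
    · exact hpair m m' hgt
  -- Main reduction: it suffices to bound the averages of `w`
  suffices hS : ∀ ε : ℝ, 0 < ε → ∀ᶠ N : ℕ in atTop, ‖∑ n ∈ Finset.Icc 1 N, w n‖ ≤ ε * N by
    -- first, Cesàro-nullity of ‖c n‖²
    have hsq : CesZero (fun n => ‖c n‖^2) := by
      intro ε hε
      have hε' : (0:ℝ) < ε / (‖y‖ + 1) := by positivity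
      filter_upwards [hS _ hε'] with N hN
      have hyy : ⟪y, ∑ n ∈ Finset.Icc 1 N, w n⟫_ℂ
          = ((∑ n ∈ Finset.Icc 1 N, ‖c n‖^2 : ℝ) : ℂ) := by
        rw [inner_sum, Complex.ofReal_sum]
        apply Finset.sum_congr rfl
        intro n _
        rw [hw]; simp only
        rw [inner_smul_right]
        have : ⟪y, (U ^ (e n)) x⟫_ℂ = c n := rfl
        rw [this, RCLike.conj_mul]
        norm_cast
      have h3 : (∑ n ∈ Finset.Icc 1 N, ‖c n‖^2)
          = ‖⟪y, ∑ n ∈ Finset.Icc 1 N, w n⟫_ℂ‖ := by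
        rw [hyy, Complex.norm_real]
        exact (abs_of_nonneg (Finset.sum_nonneg (fun n _ => by positivity))).symm
      have h2 : (∑ n ∈ Finset.Icc 1 N, ‖c n‖^2) ≤ ‖y‖ * ‖∑ n ∈ Finset.Icc 1 N, w n‖ := by
        rw [h3]; exact norm_inner_le_norm _ _
      have hN0 : (0:ℝ) ≤ N := Nat.cast_nonneg N
      calc (∑ n ∈ Finset.Icc 1 N, ‖c n‖^2)
          ≤ ‖y‖ * (ε/(‖y‖+1) * N) :=
            le_trans h2 (mul_le_mul_of_nonneg_left hN (norm_nonneg y))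
        _ ≤ ε * N := by
            have h4 : ‖y‖ * (ε/(‖y‖+1)) ≤ ε := by
              rw [mul_div_assoc']
              rw [div_le_iff₀ (by positivity)]
              nlinarith [norm_nonneg y]
            calc ‖y‖ * (ε/(‖y‖+1) * N) = (‖y‖ * (ε/(‖y‖+1))) * N := by ring
              _ ≤ ε * N := mul_le_mul_of_nonneg_right h4 hN0
    -- then conclude by Cauchy–Schwarz
    intro ε hε
    filter_upwards [hsq (ε^2) (by positivity)] with N hN
    have hcs := Finset.sum_mul_sq_le_sq_mul_sq (Finset.Icc 1 N)
      (fun n => ‖c n‖) (fun _ => (1:ℝ))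
    simp only [mul_one, one_pow] at hcs
    have hcard : (∑ _n ∈ Finset.Icc 1 N, (1:ℝ)) = N := by
      rw [Finset.sum_const, nsmul_eq_mul, Nat.card_Icc]; simp
    rw [hcard] at hcs
    have hA0 : (0:ℝ) ≤ ∑ n ∈ Finset.Icc 1 N, ‖c n‖ :=
      Finset.sum_nonneg (fun n _ => norm_nonneg _)
    have hE0 : (0:ℝ) ≤ ε * N := by positivity
    have hsq' : (∑ n ∈ Finset.Icc 1 N, ‖c n‖)^2 ≤ (ε * N)^2 := by
      calc (∑ n ∈ Finset.Icc 1 N, ‖c n‖)^2 ≤ (∑ n ∈ Finset.Icc 1 N, ‖c n‖^2) * N := hcs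
        _ ≤ (ε^2 * N) * N := mul_le_mul_of_nonneg_right hN (Nat.cast_nonneg N)
        _ = (ε * N)^2 := by ring
    nlinarith [hsq', hA0, hE0]
  -- Now prove the average bound, by the van der Corput trick
  intro ε hε
  set M : ℕ := ⌈8 * W^2 / ε^2⌉₊ + 1 with hM
  have hM1 : 1 ≤ M := by omega
  have hMpos : (0:ℝ) < M := by exact_mod_cast hM1
  have hMW : 8 * W^2 ≤ (M:ℝ) * ε^2 := by
    have h5 : 8*W^2/ε^2 ≤ (M:ℝ) := by
      refine le_trans (Nat.le_ceil _) ?_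
      exact_mod_cast Nat.le_succ _
    rw [div_le_iff₀ (by positivity)] at h5
    linarith
  set ε'' : ℝ := ε^2 / (8 * M^2) with hε''
  have hε''pos : 0 < ε'' := by positivity
  have hall : ∀ᶠ N : ℕ in atTop, ∀ m ∈ Finset.Icc 1 M, ∀ m' ∈ (Finset.Icc 1 M).erase m,
      (∑ n ∈ Finset.Icc 1 N, ‖⟪w (n+m), w (n+m')⟫_ℂ‖) ≤ ε'' * N := by
    rw [eventually_all_finset]
    intro m _
    rw [eventually_all_finset]
    intro m' hm'
    exact hpair2 m m' (Finset.ne_of_mem_erase hm').symm ε'' hε''pos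
  filter_upwards [hall, eventually_head_le (2*(M:ℝ)*W) (ε/2) (by positivity)] with N hallN hbnd
  set T : H := ∑ n ∈ Finset.Icc 1 N, w n with hT
  set G : ℕ → H := fun n => ∑ m ∈ Finset.Icc 1 M, w (n+m) with hG
  have hN0 : (0:ℝ) ≤ N := Nat.cast_nonneg N
  -- boundary comparison
  have hDm : ∀ m ∈ Finset.Icc 1 M, ‖(∑ n ∈ Finset.Icc 1 N, w (n+m)) - T‖ ≤ 2*(M:ℝ)*W := by
    intro m hm
    simp only [Finset.mem_Icc] at hm
    have hshift : (∑ n ∈ Finset.Icc 1 N, w (n+m)) = ∑ k ∈ Finset.Ioc m (N+m), w k := by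
      rw [show Finset.Ioc m (N+m) = Finset.Icc (m+1) (N+m) from (Finset.Icc_add_one_left_eq_Ioc m (N+m)).symm,
        show Finset.Icc (m+1) (N+m) = Finset.Icc (1+m) (N+m) by rw [add_comm 1 m],
        ← Finset.map_add_right_Icc 1 N m, Finset.sum_map]
      rfl
    have hTIoc : T = ∑ k ∈ Finset.Ioc 0 N, w k := by
      rw [hT, show Finset.Icc 1 N = Finset.Ioc 0 N from Finset.Icc_add_one_left_eq_Ioc 0 N]
    have split1 := Finset.sum_Ioc_consecutive w (Nat.zero_le m) (Nat.le_add_left m N)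
    have split2 := Finset.sum_Ioc_consecutive w (Nat.zero_le N) (Nat.le_add_right N m)
    have key : (∑ k ∈ Finset.Ioc m (N+m), w k) - (∑ k ∈ Finset.Ioc 0 N, w k)
        = (∑ k ∈ Finset.Ioc N (N+m), w k) - (∑ k ∈ Finset.Ioc 0 m, w k) := by
      rw [sub_eq_sub_iff_add_eq_add]
      calc (∑ k ∈ Finset.Ioc m (N+m), w k) + (∑ k ∈ Finset.Ioc 0 m, w k)
          = (∑ k ∈ Finset.Ioc 0 m, w k) + (∑ k ∈ Finset.Ioc m (N+m), w k) := add_comm _ _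
        _ = ∑ k ∈ Finset.Ioc 0 (N+m), w k := split1
        _ = (∑ k ∈ Finset.Ioc 0 N, w k) + (∑ k ∈ Finset.Ioc N (N+m), w k) := split2.symm
        _ = (∑ k ∈ Finset.Ioc N (N+m), w k) + (∑ k ∈ Finset.Ioc 0 N, w k) := add_comm _ _
    have hb1 : ‖∑ k ∈ Finset.Ioc N (N+m), w k‖ ≤ (m:ℝ) * W := by
      calc ‖∑ k ∈ Finset.Ioc N (N+m), w k‖ ≤ ∑ k ∈ Finset.Ioc N (N+m), ‖w k‖ :=
            norm_sum_le _ _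
        _ ≤ ∑ _k ∈ Finset.Ioc N (N+m), W := Finset.sum_le_sum (fun k _ => hwB k)
        _ = (m:ℝ) * W := by rw [Finset.sum_const, nsmul_eq_mul, Nat.card_Ioc]; simp
    have hb2 : ‖∑ k ∈ Finset.Ioc 0 m, w k‖ ≤ (m:ℝ) * W := by
      calc ‖∑ k ∈ Finset.Ioc 0 m, w k‖ ≤ ∑ k ∈ Finset.Ioc 0 m, ‖w k‖ := norm_sum_le _ _
        _ ≤ ∑ _k ∈ Finset.Ioc 0 m, W := Finset.sum_le_sum (fun k _ => hwB k)
        _ = (m:ℝ) * W := by rw [Finset.sum_const, nsmul_eq_mul, Nat.card_Ioc]; simp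
    have hmM : (m:ℝ) ≤ M := by exact_mod_cast hm.2
    calc ‖(∑ n ∈ Finset.Icc 1 N, w (n+m)) - T‖
        = ‖(∑ k ∈ Finset.Ioc N (N+m), w k) - (∑ k ∈ Finset.Ioc 0 m, w k)‖ := by
          rw [hshift, hTIoc, key]
      _ ≤ ‖∑ k ∈ Finset.Ioc N (N+m), w k‖ + ‖∑ k ∈ Finset.Ioc 0 m, w k‖ := norm_sub_le _ _
      _ ≤ (m:ℝ)*W + (m:ℝ)*W := add_le_add hb1 hb2
      _ ≤ 2*(M:ℝ)*W := by nlinarith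
  have hE : ‖(∑ n ∈ Finset.Icc 1 N, G n) - (M:ℕ) • T‖ ≤ 2*(M:ℝ)^2*W := by
    have hsumG : (∑ n ∈ Finset.Icc 1 N, G n)
        = ∑ m ∈ Finset.Icc 1 M, ∑ n ∈ Finset.Icc 1 N, w (n+m) := Finset.sum_comm
    have hMT : (M:ℕ) • T = ∑ _m ∈ Finset.Icc 1 M, T := by
      rw [Finset.sum_const, Nat.card_Icc]; simp
    rw [hsumG, hMT, ← Finset.sum_sub_distrib]
    calc ‖∑ m ∈ Finset.Icc 1 M, ((∑ n ∈ Finset.Icc 1 N, w (n+m)) - T)‖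
        ≤ ∑ m ∈ Finset.Icc 1 M, ‖(∑ n ∈ Finset.Icc 1 N, w (n+m)) - T‖ := norm_sum_le _ _
      _ ≤ ∑ _m ∈ Finset.Icc 1 M, (2*(M:ℝ)*W) := Finset.sum_le_sum hDm
      _ = (M:ℝ) * (2*(M:ℝ)*W) := by rw [Finset.sum_const, nsmul_eq_mul, Nat.card_Icc]; simp
      _ = 2*(M:ℝ)^2*W := by ring
  -- second moment of G
  have hGsq : (∑ n ∈ Finset.Icc 1 N, ‖G n‖^2) ≤ (M:ℝ)*W^2*(N:ℝ) + (ε^2/8)*N := by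
    have hGn : ∀ n, ‖G n‖^2
        ≤ ∑ m ∈ Finset.Icc 1 M, ∑ m' ∈ Finset.Icc 1 M, ‖⟪w (n+m), w (n+m')⟫_ℂ‖ := by
      intro n
      have h3 : ‖(⟪G n, G n⟫_ℂ)‖ = ‖G n‖^2 := by
        rw [inner_self_eq_norm_sq_to_K, norm_pow, RCLike.norm_ofReal, abs_norm]
      have h2 : ⟪G n, G n⟫_ℂ
          = ∑ m ∈ Finset.Icc 1 M, ∑ m' ∈ Finset.Icc 1 M, ⟪w (n+m), w (n+m')⟫_ℂ := by
        rw [hG]; simp only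
        rw [sum_inner]
        apply Finset.sum_congr rfl
        intro m _
        rw [inner_sum]
      calc ‖G n‖^2 = ‖(⟪G n, G n⟫_ℂ)‖ := h3.symm
        _ = ‖∑ m ∈ Finset.Icc 1 M, ∑ m' ∈ Finset.Icc 1 M, ⟪w (n+m), w (n+m')⟫_ℂ‖ := by rw [h2]
        _ ≤ ∑ m ∈ Finset.Icc 1 M, ‖∑ m' ∈ Finset.Icc 1 M, ⟪w (n+m), w (n+m')⟫_ℂ‖ :=
            norm_sum_le _ _
        _ ≤ ∑ m ∈ Finset.Icc 1 M, ∑ m' ∈ Finset.Icc 1 M, ‖⟪w (n+m), w (n+m')⟫_ℂ‖ :=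
            Finset.sum_le_sum (fun m _ => norm_sum_le _ _)
    have hswap : (∑ n ∈ Finset.Icc 1 N, ∑ m ∈ Finset.Icc 1 M, ∑ m' ∈ Finset.Icc 1 M,
        ‖⟪w (n+m), w (n+m')⟫_ℂ‖)
        = ∑ m ∈ Finset.Icc 1 M, ∑ m' ∈ Finset.Icc 1 M, ∑ n ∈ Finset.Icc 1 N,
        ‖⟪w (n+m), w (n+m')⟫_ℂ‖ := by
      rw [Finset.sum_comm]
      apply Finset.sum_congr rfl
      intro m _
      rw [Finset.sum_comm]
    have hper : ∀ m ∈ Finset.Icc 1 M, (∑ m' ∈ Finset.Icc 1 M, ∑ n ∈ Finset.Icc 1 N,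
        ‖⟪w (n+m), w (n+m')⟫_ℂ‖) ≤ W^2*(N:ℝ) + (M:ℝ)*(ε''*N) := by
      intro m hm
      have hsplit := (Finset.add_sum_erase (Finset.Icc 1 M)
        (fun m' => ∑ n ∈ Finset.Icc 1 N, ‖⟪w (n+m), w (n+m')⟫_ℂ‖) hm).symm
      rw [hsplit]
      have hdiag : (∑ n ∈ Finset.Icc 1 N, ‖⟪w (n+m), w (n+m)⟫_ℂ‖) ≤ W^2*(N:ℝ) := by
        calc (∑ n ∈ Finset.Icc 1 N, ‖⟪w (n+m), w (n+m)⟫_ℂ‖)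
            ≤ ∑ n ∈ Finset.Icc 1 N, W^2 := by
              apply Finset.sum_le_sum
              intro n _
              calc ‖⟪w (n+m), w (n+m)⟫_ℂ‖ ≤ ‖w (n+m)‖ * ‖w (n+m)‖ := norm_inner_le_norm _ _
                _ ≤ W * W := mul_le_mul (hwB _) (hwB _) (norm_nonneg _) hW0.le
                _ = W^2 := by ring
          _ = W^2*(N:ℝ) := by rw [Finset.sum_const, nsmul_eq_mul, Nat.card_Icc]; simp [mul_comm]
      have hoff : (∑ m' ∈ (Finset.Icc 1 M).erase m, ∑ n ∈ Finset.Icc 1 N,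
          ‖⟪w (n+m), w (n+m')⟫_ℂ‖) ≤ (M:ℝ)*(ε''*N) := by
        calc (∑ m' ∈ (Finset.Icc 1 M).erase m, ∑ n ∈ Finset.Icc 1 N,
            ‖⟪w (n+m), w (n+m')⟫_ℂ‖)
            ≤ ∑ _m' ∈ (Finset.Icc 1 M).erase m, (ε''*N) :=
              Finset.sum_le_sum (fun m' hm' => hallN m hm m' hm')
          _ = ((Finset.Icc 1 M).erase m).card * (ε''*N) := by
              rw [Finset.sum_const, nsmul_eq_mul]
          _ ≤ (M:ℝ)*(ε''*N) := by
              apply mul_le_mul_of_nonneg_right _ (by positivity)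
              have h6 : ((Finset.Icc 1 M).erase m).card ≤ M := by
                calc ((Finset.Icc 1 M).erase m).card ≤ (Finset.Icc 1 M).card :=
                      Finset.card_le_card (Finset.erase_subset _ _)
                  _ = M := by rw [Nat.card_Icc]; omega
              exact_mod_cast h6
      linarith
    calc (∑ n ∈ Finset.Icc 1 N, ‖G n‖^2)
        ≤ ∑ n ∈ Finset.Icc 1 N, ∑ m ∈ Finset.Icc 1 M, ∑ m' ∈ Finset.Icc 1 M,
            ‖⟪w (n+m), w (n+m')⟫_ℂ‖ := Finset.sum_le_sum (fun n _ => hGn n)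
      _ = ∑ m ∈ Finset.Icc 1 M, ∑ m' ∈ Finset.Icc 1 M, ∑ n ∈ Finset.Icc 1 N,
            ‖⟪w (n+m), w (n+m')⟫_ℂ‖ := hswap
      _ ≤ ∑ _m ∈ Finset.Icc 1 M, (W^2*(N:ℝ) + (M:ℝ)*(ε''*N)) := Finset.sum_le_sum hper
      _ = (M:ℝ) * (W^2*(N:ℝ) + (M:ℝ)*(ε''*N)) := by
          rw [Finset.sum_const, nsmul_eq_mul, Nat.card_Icc]; simp
      _ = (M:ℝ)*W^2*(N:ℝ) + (M:ℝ)^2*ε''*N := by ring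
      _ = (M:ℝ)*W^2*(N:ℝ) + (ε^2/8)*N := by
          rw [hε'']
          field_simp
  -- combine
  have hGsum : (∑ n ∈ Finset.Icc 1 N, ‖G n‖) ≤ ε * (M:ℝ) * N / 2 := by
    have hcs := Finset.sum_mul_sq_le_sq_mul_sq (Finset.Icc 1 N)
      (fun n => ‖G n‖) (fun _ => (1:ℝ))
    simp only [mul_one, one_pow] at hcs
    have hcard : (∑ _n ∈ Finset.Icc 1 N, (1:ℝ)) = N := by
      rw [Finset.sum_const, nsmul_eq_mul, Nat.card_Icc]; simp
    rw [hcard] at hcs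
    have hMW2 : (M:ℝ)*W^2 ≤ ε^2*(M:ℝ)^2/8 := by
      have h9 := mul_le_mul_of_nonneg_left hMW (le_of_lt hMpos)
      nlinarith [h9]
    have hsq' : (∑ n ∈ Finset.Icc 1 N, ‖G n‖)^2 ≤ (ε * (M:ℝ) * N / 2)^2 := by
      calc (∑ n ∈ Finset.Icc 1 N, ‖G n‖)^2
          ≤ (∑ n ∈ Finset.Icc 1 N, ‖G n‖^2) * N := hcs
        _ ≤ ((M:ℝ)*W^2*(N:ℝ) + (ε^2/8)*N) * N := mul_le_mul_of_nonneg_right hGsq hN0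
        _ ≤ (ε^2*(M:ℝ)^2/8*(N:ℝ) + (ε^2*(M:ℝ)^2/8)*N) * N := by
            apply mul_le_mul_of_nonneg_right _ hN0
            have hM1' : (1:ℝ) ≤ (M:ℝ) := by exact_mod_cast hM1
            have hMsq : (1:ℝ) ≤ (M:ℝ)^2 := by nlinarith
            have h7 : (ε^2/8)*(N:ℝ) ≤ (ε^2*(M:ℝ)^2/8)*N := by
              apply mul_le_mul_of_nonneg_right _ hN0
              nlinarith [sq_nonneg ε]
            nlinarith
        _ = (ε^2*(M:ℝ)^2/4) * N^2 := by ring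
        _ = (ε * (M:ℝ) * N / 2)^2 := by ring
    have hA0 : (0:ℝ) ≤ ∑ n ∈ Finset.Icc 1 N, ‖G n‖ :=
      Finset.sum_nonneg (fun n _ => norm_nonneg _)
    have hE0 : (0:ℝ) ≤ ε * (M:ℝ) * N / 2 := by positivity
    nlinarith [hsq', hA0, hE0]
  have hMTnorm : ‖(M:ℕ) • T‖ = (M:ℝ) * ‖T‖ := by
    rw [← Nat.cast_smul_eq_nsmul (R := ℝ) M T, norm_smul]
    simp
  have htri : (M:ℝ) * ‖T‖ ≤ (∑ n ∈ Finset.Icc 1 N, ‖G n‖) + 2*(M:ℝ)^2*W := by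
    have h8 : ‖(M:ℕ) • T‖ ≤ ‖∑ n ∈ Finset.Icc 1 N, G n‖
        + ‖(∑ n ∈ Finset.Icc 1 N, G n) - (M:ℕ) • T‖ := by
      have := norm_sub_le ((∑ n ∈ Finset.Icc 1 N, G n)) ((∑ n ∈ Finset.Icc 1 N, G n) - (M:ℕ) • T)
      simpa using this
    rw [hMTnorm] at h8
    calc (M:ℝ) * ‖T‖ ≤ ‖∑ n ∈ Finset.Icc 1 N, G n‖
          + ‖(∑ n ∈ Finset.Icc 1 N, G n) - (M:ℕ) • T‖ := h8
      _ ≤ (∑ n ∈ Finset.Icc 1 N, ‖G n‖) + 2*(M:ℝ)^2*W :=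
          add_le_add (norm_sum_le _ _) hE
  have hfinal : (M:ℝ) * ‖T‖ ≤ (M:ℝ) * (ε * N) := by
    calc (M:ℝ) * ‖T‖ ≤ (∑ n ∈ Finset.Icc 1 N, ‖G n‖) + 2*(M:ℝ)^2*W := htri
      _ ≤ ε * (M:ℝ) * N / 2 + (M:ℝ) * (2*(M:ℝ)*W) := by
          apply add_le_add hGsum
          have : 2*(M:ℝ)^2*W = (M:ℝ) * (2*(M:ℝ)*W) := by ring
          linarith [this.le]
      _ ≤ ε * (M:ℝ) * N / 2 + (M:ℝ) * (ε/2 * N) := by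
          apply add_le_add le_rfl
          exact mul_le_mul_of_nonneg_left hbnd hMpos.le
      _ = (M:ℝ) * (ε * N) := by ring
  exact le_of_mul_le_mul_left hfinal hMpos

end Step
section Final

variable {H : Type*} [NormedAddCommGroup H] [InnerProductSpace ℂ H]
variable {U : H →L[ℂ] H}

lemma keyP (hiso : ∀ x : H, ‖U x‖ = ‖x‖)
    (haws : ∀ x : H, ∃ S : Set ℕ, HasDensity S 1 ∧
      ∀ y : H, Tendsto (fun n : ℕ => ⟪y, (U ^ n) x⟫_ℂ) (atTop ⊓ Filter.principal S) (nhds 0)) :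
    ∀ d : ℕ, ∀ q : Polynomial ℤ, 1 ≤ q.natDegree → q.natDegree ≤ d → 0 < q.leadingCoeff →
    ∀ x y : H, CesZero (fun n : ℕ => ‖⟪y, (U ^ ((q.eval (n:ℤ)).toNat)) x⟫_ℂ‖) := by
  intro d
  induction d with
  | zero => intro q h1 h2 _ x y; omega
  | succ d ih =>
    intro q h1 h2 hq x y
    rcases le_or_gt q.natDegree d with hle | hgt
    · exact ih q h1 hle hq x y
    · have hDeq : q.natDegree = d + 1 := by omega
      by_cases hd0 : d = 0
      · subst hd0
        exact key_base hiso haws (by omega) hq x y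
      · exact key_step hiso (by omega) hDeq hq (fun r a b cc z u => ih r a b cc z u) x y

end Final

end AWS

/-- If `U` is an almost weakly stable unitary operator on a Hilbert space, then for every
`h` and every nonconstant polynomial `p ∈ ℤ[X]` with `p(ℕ⁺) ⊆ ℕ`, the sequence
`(U^{p(n)} h)` is almost weakly stable. -/
theorem stmt8 {H : Type*} [NormedAddCommGroup H] [InnerProductSpace ℂ H] [CompleteSpace H]
    (U : H →L[ℂ] H) (hiso : ∀ x : H, ‖U x‖ = ‖x‖) (hsurj : Function.Surjective U)
    (haws : ∀ x : H, ∃ S : Set ℕ, HasDensity S 1 ∧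
      ∀ y : H, Tendsto (fun n : ℕ => ⟪y, (U ^ n) x⟫_ℂ) (atTop ⊓ Filter.principal S) (nhds 0))
    (p : Polynomial ℤ) (hdeg : 0 < p.natDegree)
    (hp : ∀ n : ℕ, 0 < n → 0 ≤ p.eval (n : ℤ)) :
    ∀ h : H, ∃ S : Set ℕ, HasDensity S 1 ∧
      ∀ y : H, Tendsto (fun n : ℕ => ⟪y, (U ^ (p.eval (n : ℤ)).toNat) h⟫_ℂ)
        (atTop ⊓ Filter.principal S) (nhds 0) := by
  intro h
  have hlead : 0 < p.leadingCoeff := AWS.leadingCoeff_pos_of_nonneg hdeg hp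
  set u : ℕ → H := fun n => (U ^ ((p.eval (n:ℤ)).toNat)) h with hu
  have hces : ∀ y : H, AWS.CesZero (fun n => ‖⟪y, u n⟫_ℂ‖) :=
    fun y => AWS.keyP hiso haws p.natDegree p hdeg le_rfl hlead h y
  obtain ⟨S, hS, hft⟩ := AWS.exists_density_set (fun j n => ‖⟪(U ^ j) h, u n⟫_ℂ‖)
    (fun j n => norm_nonneg _) (fun j => hces _)
  refine ⟨S, hS, ?_⟩
  intro y
  set K : Submodule ℂ H :=
    (Submodule.span ℂ (Set.range (fun k : ℕ => (U ^ k) h))).topologicalClosure with hK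
  haveI : CompleteSpace K := (Submodule.isClosed_topologicalClosure _).completeSpace_coe
  set v : H := (Submodule.orthogonalProjectionOnto K y : H) with hv
  have huK : ∀ n, u n ∈ K := fun n =>
    Submodule.le_topologicalClosure _ (Submodule.subset_span ⟨(p.eval (n:ℤ)).toNat, rfl⟩)
  have hyv : ∀ n, ⟪y, u n⟫_ℂ = ⟪v, u n⟫_ℂ := by
    intro n
    have h2 : ⟪y - v, u n⟫_ℂ = 0 := K.starProjection_inner_eq_zero y (u n) (huK n)
    rw [inner_sub_left] at h2
    exact (sub_eq_zero.mp h2)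
  have hspan : ∀ z ∈ Submodule.span ℂ (Set.range (fun k : ℕ => (U ^ k) h)),
      Tendsto (fun n => ⟪z, u n⟫_ℂ) (atTop ⊓ Filter.principal S) (nhds 0) := by
    intro z hz
    induction hz using Submodule.span_induction with
    | mem z0 hz0 =>
      obtain ⟨k, rfl⟩ := hz0
      rw [tendsto_zero_iff_norm_tendsto_zero]
      exact hft k
    | zero =>
      simp only [inner_zero_left]
      exact tendsto_const_nhds
    | add a b _ _ hA hB =>
      have := hA.add hB
      simp only [← inner_add_left] at this
      simpa only [add_zero] using this
    | smul a z0 _ hZ =>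
      have := hZ.const_mul ((starRingEnd ℂ) a)
      simp only [← inner_smul_left] at this
      simpa only [mul_zero] using this
  have hvK : v ∈ K := Submodule.coe_mem _
  have hfun : (fun n => ⟪y, u n⟫_ℂ) = fun n => ⟪v, u n⟫_ℂ := funext hyv
  show Tendsto (fun n => ⟪y, u n⟫_ℂ) (atTop ⊓ Filter.principal S) (nhds 0)
  rw [hfun]
  rw [NormedAddCommGroup.tendsto_nhds_zero]
  intro ε hε
  have hcl : v ∈ closure ((Submodule.span ℂ (Set.range (fun k : ℕ => (U ^ k) h)) : Submodule ℂ H)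
      : Set H) := hvK
  obtain ⟨z, hzmem, hzclose⟩ := Metric.mem_closure_iff.mp hcl (ε/(2*(‖h‖+1))) (by positivity)
  have hz0 := hspan z hzmem
  rw [NormedAddCommGroup.tendsto_nhds_zero] at hz0
  filter_upwards [hz0 (ε/2) (by positivity)] with n hn
  have hnormu : ‖u n‖ = ‖h‖ := AWS.norm_U_pow hiso _ h
  have hdiff : ‖⟪v, u n⟫_ℂ - ⟪z, u n⟫_ℂ‖ ≤ ‖v - z‖ * ‖h‖ := by
    rw [← inner_sub_left]
    exact (norm_inner_le_norm _ _).trans (by rw [hnormu])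
  have hvz : ‖v - z‖ ≤ ε/(2*(‖h‖+1)) := by
    rw [← dist_eq_norm]; exact hzclose.le
  have hsmall : ‖v - z‖ * ‖h‖ ≤ ε/2 := by
    have h3 : ‖v - z‖ * ‖h‖ ≤ (ε/(2*(‖h‖+1))) * ‖h‖ :=
      mul_le_mul_of_nonneg_right hvz (norm_nonneg h)
    have h4 : (ε/(2*(‖h‖+1))) * ‖h‖ ≤ ε/2 := by
      rw [div_mul_eq_mul_div, div_le_div_iff₀ (by positivity) (by norm_num)]
      nlinarith [norm_nonneg h]
    linarith
  calc ‖⟪v, u n⟫_ℂ‖ ≤ ‖⟪z, u n⟫_ℂ‖ + ‖⟪v, u n⟫_ℂ - ⟪z, u n⟫_ℂ‖ := by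
        have := norm_add_le (⟪z, u n⟫_ℂ) (⟪v, u n⟫_ℂ - ⟪z, u n⟫_ℂ)
        simpa using this
    _ ≤ ‖⟪z, u n⟫_ℂ‖ + ‖v - z‖ * ‖h‖ := add_le_add le_rfl hdiff
    _ < ε/2 + ε/2 := add_lt_add_of_lt_of_le hn hsmall
    _ = ε := by ring
end

section
/- Let T be a power-bounded operator on a separable Banach space X such that for every x ∈ X the orbit (T^n x) converges weakly to 0 along some set of indices of density 1 (possibly depending on x). Then there exists a single set of indices (n_j) of density 1 such that T^{n_j} → 0 in the weak operator topology, i.e., T^{n_j} x → 0 weakly for every x ∈ X simultaneously. -/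
open Filter

open Classical in
noncomputable def cnt (S : Set ℕ) (n : ℕ) : ℕ :=
  ((Finset.Icc 1 n).filter (fun k => k ∈ S)).card

lemma sum_ind_eq_cnt (S : Set ℕ) (n : ℕ) :
    (∑ k ∈ Finset.Icc 1 n, Set.indicator S (fun _ => (1:ℝ)) k) = cnt S n := by
  classical
  simp [cnt, Set.indicator_apply, Finset.sum_boole]

lemma hasDensity_iff (S : Set ℕ) (d : ℝ) :
    HasDensity S d ↔ Tendsto (fun n => (cnt S n : ℝ)/n) atTop (nhds d) := by
  unfold HasDensity
  simp_rw [sum_ind_eq_cnt]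

lemma cnt_eq (S : Set ℕ) [DecidablePred (· ∈ S)] (n : ℕ) :
    cnt S n = ((Finset.Icc 1 n).filter (fun k => k ∈ S)).card := by
  unfold cnt
  congr!

lemma cnt_le (S : Set ℕ) (n : ℕ) : cnt S n ≤ n := by
  classical
  calc cnt S n ≤ (Finset.Icc 1 n).card := Finset.card_filter_le _ _
    _ = n := by simp

lemma cnt_mono {S T : Set ℕ} (h : S ⊆ T) (n : ℕ) : cnt S n ≤ cnt T n := by
  classical
  exact Finset.card_le_card (Finset.monotone_filter_right _ (fun k _ hk => h hk))

lemma cnt_inter_add (S T : Set ℕ) (n : ℕ) :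
    cnt S n + cnt T n ≤ cnt (S ∩ T) n + n := by
  classical
  have h1 : (Finset.Icc 1 n).filter (fun k => k ∈ S) ∩ (Finset.Icc 1 n).filter (fun k => k ∈ T)
      = (Finset.Icc 1 n).filter (fun k => k ∈ S ∩ T) := by
    ext k; simp [Finset.mem_filter]; tauto
  rw [cnt_eq, cnt_eq, cnt_eq]
  calc ((Finset.Icc 1 n).filter (fun k => k ∈ S)).card + ((Finset.Icc 1 n).filter (fun k => k ∈ T)).card
      = ((Finset.Icc 1 n).filter (fun k => k ∈ S) ∩ (Finset.Icc 1 n).filter (fun k => k ∈ T)).card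
        + ((Finset.Icc 1 n).filter (fun k => k ∈ S) ∪ (Finset.Icc 1 n).filter (fun k => k ∈ T)).card := by
        rw [Finset.card_inter_add_card_union]
    _ ≤ ((Finset.Icc 1 n).filter (fun k => k ∈ S ∩ T)).card + n := by
        rw [h1]
        refine Nat.add_le_add le_rfl ?_
        calc _ ≤ (Finset.Icc 1 n).card :=
              Finset.card_le_card (by
                intro k hk
                rcases Finset.mem_union.1 hk with h | h <;> exact Finset.mem_of_mem_filter _ h)
          _ = n := by simp

lemma cnt_le_cnt_add {S T : Set ℕ} (n a : ℕ) (h : ∀ k, a < k → k ≤ n → k ∈ T → k ∈ S) :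
    cnt T n ≤ cnt S n + a := by
  classical
  have hsub : (Finset.Icc 1 n).filter (fun k => k ∈ T)
      ⊆ ((Finset.Icc 1 n).filter (fun k => k ∈ S)) ∪ Finset.Icc 1 a := by
    intro k hk
    simp only [Finset.mem_filter, Finset.mem_Icc, Finset.mem_union] at *
    rcases le_or_gt k a with hka | hka
    · exact Or.inr ⟨hk.1.1, hka⟩
    · exact Or.inl ⟨hk.1, h k hka hk.1.2 hk.2⟩
  calc cnt T n ≤ _ := Finset.card_le_card hsub
    _ ≤ _ + (Finset.Icc 1 a).card := Finset.card_union_le _ _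
    _ ≤ cnt S n + a := by simp [cnt]

lemma HasDensity.inter {S T : Set ℕ} (hS : HasDensity S 1) (hT : HasDensity T 1) :
    HasDensity (S ∩ T) 1 := by
  rw [hasDensity_iff] at *
  have hlow : Tendsto (fun n => (cnt S n : ℝ)/n + (cnt T n : ℝ)/n - 1) atTop (nhds 1) := by
    have := (hS.add hT).sub_const 1
    norm_num at this
    exact this
  refine tendsto_of_tendsto_of_tendsto_of_le_of_le' hlow hS ?_ ?_
  · filter_upwards [eventually_ge_atTop 1] with n hn
    have hn' : (0:ℝ) < n := by exact_mod_cast hn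
    have h1 : (cnt S n : ℝ) + cnt T n ≤ (cnt (S ∩ T) n : ℝ) + n := by
      exact_mod_cast cnt_inter_add S T n
    have heq : (cnt S n : ℝ)/n + (cnt T n : ℝ)/n - 1 = ((cnt S n : ℝ) + cnt T n - n)/n := by
      field_simp
    rw [heq, div_le_div_iff_of_pos_right hn']
    linarith
  · filter_upwards [eventually_ge_atTop 1] with n hn
    have hn' : (0:ℝ) < n := by exact_mod_cast hn
    rw [div_le_div_iff_of_pos_right hn']
    exact_mod_cast cnt_mono Set.inter_subset_left n

lemma diagonal (S : ℕ → Set ℕ) (hS : ∀ i, HasDensity (S i) 1) :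
    ∃ S' : Set ℕ, HasDensity S' 1 ∧ ∀ i, ∃ M : ℕ, ∀ n, M < n → n ∈ S' → n ∈ S i := by
  -- nested intersections
  set I : ℕ → Set ℕ := fun m => Nat.rec (S 0) (fun p Ip => Ip ∩ S (p+1)) m with hIdef
  have hI0 : I 0 = S 0 := rfl
  have hIsucc : ∀ p, I (p+1) = I p ∩ S (p+1) := fun p => rfl
  have hI : ∀ m, HasDensity (I m) 1 := by
    intro m
    induction m with
    | zero => exact hS 0
    | succ p ih => rw [hIsucc]; exact ih.inter (hS (p+1))
  have hIsub : ∀ i m, i ≤ m → I m ⊆ S i := by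
    intro i m
    induction m with
    | zero => intro h; rw [Nat.le_zero.1 h]; exact hI0.le
    | succ p ih =>
      intro h
      rcases Nat.lt_or_ge i (p+1) with h' | h'
      · rw [hIsucc]; exact (Set.inter_subset_left).trans (ih (Nat.lt_succ_iff.1 h'))
      · have : i = p + 1 := le_antisymm h h'
        rw [this, hIsucc]; exact Set.inter_subset_right
  -- thresholds
  have hthr : ∀ m : ℕ, ∃ M : ℕ, ∀ n, M ≤ n → 1 - 1/(m+1:ℝ) ≤ (cnt (I m) n : ℝ)/n := by
    intro m
    have h := (hasDensity_iff _ _).1 (hI m)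
    have hlt : 1 - 1/(m+1:ℝ) < 1 := by
      have : (0:ℝ) < 1/(m+1:ℝ) := by positivity
      linarith
    have h2 := h.eventually (eventually_ge_nhds hlt)
    exact eventually_atTop.1 h2
  choose Mf hMf using hthr
  -- block boundaries
  set N : ℕ → ℕ := fun m => Nat.rec 0 (fun p Np => max (Mf (p+1)) ((p+2) * Np + 1)) m with hNdef
  have hN0 : N 0 = 0 := rfl
  have hNsucc : ∀ p, N (p+1) = max (Mf (p+1)) ((p+2) * N p + 1) := fun p => rfl
  have hNM : ∀ p, Mf (p+1) ≤ N (p+1) := fun p => by rw [hNsucc]; exact le_max_left _ _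
  have hNgrow : ∀ p, (p+2) * N p + 1 ≤ N (p+1) := fun p => by rw [hNsucc]; exact le_max_right _ _
  have hNmono : StrictMono N := by
    apply strictMono_nat_of_lt_succ
    intro p
    calc N p < (p+2) * N p + 1 := by nlinarith [Nat.zero_le (N p)]
      _ ≤ N (p+1) := hNgrow p
  -- the diagonal set
  set S' : Set ℕ := {n | ∃ m, n ∈ I m ∧ N m < n ∧ n ≤ N (m+1)} with hS'def
  refine ⟨S', ?_, ?_⟩
  · -- density 1
    have key : ∀ p n, N (p+1) < n → n ≤ N (p+2) → 1 - 2/(p+2:ℝ) ≤ (cnt S' n : ℝ)/n := by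
      intro p n h1n h2n
      have hn0 : 0 < n := lt_of_le_of_lt (Nat.zero_le _) h1n
      have hn0' : (0:ℝ) < n := by exact_mod_cast hn0
      have hthr_n : 1 - 1/(p+2:ℝ) ≤ (cnt (I (p+1)) n : ℝ)/n := by
        have := hMf (p+1) n (le_trans (hNM p) (le_of_lt h1n))
        convert this using 3
        push_cast; ring
      have hc : cnt (I (p+1)) n ≤ cnt S' n + N p := by
        apply cnt_le_cnt_add
        intro k hk1 hk2 hk3
        rcases le_or_gt k (N (p+1)) with hk | hk
        · exact ⟨p, (hIsucc p ▸ hk3).1, hk1, hk⟩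
        · exact ⟨p+1, hk3, hk, le_trans hk2 h2n⟩
      have hNp : (p+2:ℝ) * N p ≤ n := by
        have hlt : (p+2) * N p < n := by have := hNgrow p; omega
        exact_mod_cast Nat.le_of_lt hlt
      have hNpn : (N p : ℝ)/n ≤ 1/(p+2:ℝ) := by
        rw [div_le_div_iff₀ hn0' (by positivity)]
        linarith
      have hdiv : (cnt (I (p+1)) n : ℝ)/n ≤ (cnt S' n : ℝ)/n + (N p : ℝ)/n := by
        rw [← add_div, div_le_div_iff_of_pos_right hn0']
        exact_mod_cast hc
      have h2 : 2/((p:ℝ)+2) = 1/((p:ℝ)+2) + 1/((p:ℝ)+2) := by ring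
      linarith
    rw [hasDensity_iff]
    rw [tendsto_order]
    constructor
    · intro a ha
      obtain ⟨m₀, hm₀⟩ := exists_nat_gt (2/(1-a))
      have hm₀' : 2/((m₀+1:ℕ)+1:ℝ) < 1 - a := by
        rw [div_lt_iff₀ (by positivity)]
        have h1a : 0 < 1 - a := by linarith
        have : 2/(1-a) < ((m₀+1:ℕ):ℝ) + 1 := by push_cast; linarith
        calc (2:ℝ) = (2/(1-a)) * (1-a) := by field_simp
          _ < (((m₀+1:ℕ):ℝ)+1) * (1-a) := by
            apply mul_lt_mul_of_pos_right this h1a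
          _ = (1-a) * (((m₀+1:ℕ):ℝ)+1) := by ring
      filter_upwards [eventually_gt_atTop (N (m₀+1))] with n hn
      -- locate block
      have hex : ∃ k, n ≤ N k := ⟨n, hNmono.le_apply⟩
      set K := Nat.find hex with hK
      have hK1 : n ≤ N K := Nat.find_spec hex
      have hKgt : m₀ + 1 < K := by
        by_contra hcon
        push_neg at hcon
        exact absurd (le_trans hK1 (hNmono.monotone hcon)) (not_le.2 hn)
      have hK0 : K ≠ 0 := by omega
      obtain ⟨m, hm⟩ : ∃ m, K = m + 1 := ⟨K - 1, by omega⟩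
      rw [hm] at hK1
      have hm1 : m₀ ≤ m := by omega
      have hNm : N m < n := by
        have := Nat.find_min hex (m := m) (by omega)
        omega
      -- m ≥ 1 so write m = p+1
      obtain ⟨p, rfl⟩ : ∃ p, m = p + 1 := ⟨m - 1, by omega⟩
      have hkey := key p n hNm hK1
      have hp0 : m₀ ≤ p := by omega
      have hp0' : (m₀:ℝ) ≤ p := by exact_mod_cast hp0
      have hmono : 2/((p:ℝ)+2) ≤ 2/((m₀:ℝ)+2) := by
        apply div_le_div_of_nonneg_left (by norm_num) (by positivity)
        linarith
      have hcast : ((m₀+1:ℕ):ℝ)+1 = (m₀:ℝ)+2 := by push_cast; ring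
      rw [hcast] at hm₀'
      linarith
    · intro a ha
      filter_upwards [eventually_ge_atTop 1] with n hn
      have hn' : (0:ℝ) < n := by exact_mod_cast hn
      have : (cnt S' n : ℝ)/n ≤ 1 := by
        rw [div_le_one hn']
        exact_mod_cast cnt_le S' n
      linarith
  · -- tail property
    intro i
    refine ⟨N i, ?_⟩
    rintro n hni ⟨m, hmI, hm1, hm2⟩
    have : i < m + 1 := hNmono.lt_iff_lt.1 (lt_of_lt_of_le hni hm2)
    exact hIsub i m (by omega) hmI

/-- For a power-bounded operator on a separable Banach space whose every orbit converges
weakly to 0 along some density-1 set, there is a single density-1 set along which the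
powers converge to 0 in the weak operator topology. -/
theorem stmt13 {X : Type*} [NormedAddCommGroup X] [NormedSpace ℝ X] [CompleteSpace X]
    [TopologicalSpace.SeparableSpace X]
    (T : X →L[ℝ] X) (hpb : ∃ C : ℝ, ∀ n : ℕ, ‖T ^ n‖ ≤ C)
    (haws : ∀ x : X, ∃ S : Set ℕ, HasDensity S 1 ∧
      ∀ f : X →L[ℝ] ℝ, Tendsto (fun n : ℕ => f ((T ^ n) x)) (atTop ⊓ Filter.principal S)
        (nhds 0)) :
    ∃ S : Set ℕ, HasDensity S 1 ∧
      ∀ x : X, ∀ f : X →L[ℝ] ℝ,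
        Tendsto (fun n : ℕ => f ((T ^ n) x)) (atTop ⊓ Filter.principal S) (nhds 0) := by
  obtain ⟨C, hC⟩ := hpb
  have hne : Nonempty X := ⟨0⟩
  set u := TopologicalSpace.denseSeq X with hu
  have hdense : DenseRange u := TopologicalSpace.denseRange_denseSeq X
  choose Si hSi1 hSi2 using fun i => haws (u i)
  obtain ⟨S, hSd, hStail⟩ := diagonal Si hSi1
  refine ⟨S, hSd, ?_⟩
  intro x f
  rw [NormedAddCommGroup.tendsto_nhds_zero]
  intro ε hε
  set C' : ℝ := max C 1 with hC'def
  have hC'pos : (0:ℝ) < C' := lt_of_lt_of_le one_pos (le_max_right _ _)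
  have hC' : ∀ (n : ℕ) (y : X), ‖(T^n) y‖ ≤ C' * ‖y‖ := by
    intro n y
    calc ‖(T^n) y‖ ≤ ‖T^n‖ * ‖y‖ := (T^n).le_opNorm y
      _ ≤ C' * ‖y‖ := by
        apply mul_le_mul_of_nonneg_right ((hC n).trans (le_max_left _ _)) (norm_nonneg y)
  set δ : ℝ := ε / (2 * (‖f‖ + 1) * C') with hδdef
  have hδ : 0 < δ := by positivity
  obtain ⟨i, hi⟩ := hdense.exists_dist_lt x hδ
  rw [dist_eq_norm] at hi
  -- transfer convergence for u i from S_i to S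
  obtain ⟨M, hM⟩ := hStail i
  have hle : atTop ⊓ Filter.principal S ≤ atTop ⊓ Filter.principal (Si i) := by
    refine le_inf inf_le_left ?_
    have h1 : atTop ⊓ Filter.principal S ≤ Filter.principal (S ∩ Set.Ioi M) := by
      rw [← inf_principal]
      exact le_inf inf_le_right (inf_le_left.trans (le_principal_iff.2 (Ioi_mem_atTop M)))
    exact h1.trans (principal_mono.2 (fun n hn => hM n hn.2 hn.1))
  have h1 : Tendsto (fun n => f ((T^n) (u i))) (atTop ⊓ Filter.principal S) (nhds 0) :=
    (hSi2 i f).mono_left hle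
  have h2 := (NormedAddCommGroup.tendsto_nhds_zero.1 h1) (ε/2) (by positivity)
  filter_upwards [h2] with n hn
  have hsplit : f ((T^n) x) = f ((T^n) (x - u i)) + f ((T^n) (u i)) := by
    rw [map_sub, map_sub]; ring
  have hb1 : ‖f ((T^n) (x - u i))‖ ≤ ‖f‖ * (C' * ‖x - u i‖) :=
    (f.le_opNorm _).trans (mul_le_mul_of_nonneg_left (hC' n _) (norm_nonneg f))
  have hb2 : ‖f‖ * (C' * ‖x - u i‖) < ε/2 := by
    have hlt : ‖f‖ * (C' * ‖x - u i‖) ≤ (‖f‖ + 1) * (C' * ‖x - u i‖) := by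
      apply mul_le_mul_of_nonneg_right (by linarith) (by positivity)
    have hlt2 : (‖f‖ + 1) * (C' * ‖x - u i‖) < (‖f‖ + 1) * (C' * δ) := by
      apply mul_lt_mul_of_pos_left ?_ (by positivity)
      exact mul_lt_mul_of_pos_left hi hC'pos
    have heq : (‖f‖ + 1) * (C' * δ) = ε/2 := by
      rw [hδdef]
      field_simp
    linarith
  calc ‖f ((T^n) x)‖ = ‖f ((T^n) (x - u i)) + f ((T^n) (u i))‖ := by rw [hsplit]
    _ ≤ ‖f ((T^n) (x - u i))‖ + ‖f ((T^n) (u i))‖ := norm_add_le _ _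
    _ < ε/2 + ε/2 := add_lt_add_of_le_of_lt (hb1.trans hb2.le) hn
    _ = ε := by ring
end

section
/- Let U be a unitary operator on a Hilbert space H with no eigenvalues on the unit circle (i.e., no nonzero h ∈ H and λ ∈ ℂ with |λ| = 1 satisfy Uh = λh). Then for every h ∈ H the orbit (U^n h) converges weakly to 0 along a set of indices of density 1. -/
open Filter
open scoped InnerProductSpace

set_option linter.unusedSectionVars false
set_option linter.unusedVariables false
set_option linter.unreachableTactic false
set_option linter.unusedTactic false

namespace Stmt15Aux

variable {H : Type*} [NormedAddCommGroup H] [InnerProductSpace ℂ H] [CompleteSpace H]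

lemma norm_pow_apply (U : H →L[ℂ] H) (hiso : ∀ x : H, ‖U x‖ = ‖x‖) (n : ℕ) (x : H) :
    ‖(U ^ n) x‖ = ‖x‖ := by
  induction n with
  | zero => simp
  | succ n ih => rw [pow_succ', ContinuousLinearMap.mul_apply, hiso, ih]

lemma inner_U (U : H →L[ℂ] H) (hiso : ∀ x : H, ‖U x‖ = ‖x‖) (x y : H) :
    ⟪U x, U y⟫_ℂ = ⟪x, y⟫_ℂ := by
  let Ui : H →ₗᵢ[ℂ] H := ⟨U.toLinearMap, hiso⟩
  exact Ui.inner_map_map x y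

lemma inner_pow (U : H →L[ℂ] H) (hiso : ∀ x : H, ‖U x‖ = ‖x‖) (a : ℕ) (x y : H) :
    ⟪(U ^ a) x, (U ^ a) y⟫_ℂ = ⟪x, y⟫_ℂ := by
  induction a with
  | zero => simp
  | succ a ih => rw [pow_succ', ContinuousLinearMap.mul_apply,
      ContinuousLinearMap.mul_apply, inner_U U hiso, ih]

/-- the orbit -/
noncomputable def u (U : H →L[ℂ] H) (h : H) (n : ℕ) : H := (U ^ n) h

lemma norm_u (U : H →L[ℂ] H) (hiso : ∀ x : H, ‖U x‖ = ‖x‖) (h : H) (n : ℕ) :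
    ‖u U h n‖ = ‖h‖ := norm_pow_apply U hiso n h

lemma u_shift (U : H →L[ℂ] H) (h : H) (a n : ℕ) : (U ^ a) (u U h n) = u U h (n + a) := by
  simp only [u, ← ContinuousLinearMap.mul_apply, ← pow_add, add_comm]

lemma d_shift (U : H →L[ℂ] H) (hiso : ∀ x : H, ‖U x‖ = ‖x‖) (h : H) (a n m : ℕ) :
    ⟪u U h (n + a), u U h (m + a)⟫_ℂ = ⟪u U h n, u U h m⟫_ℂ := by
  rw [← u_shift, ← u_shift, inner_pow U hiso]

/-- partial exponential sums -/
noncomputable def s (U : H →L[ℂ] H) (h : H) (lam : ℂ) (L : ℕ) : H :=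
  ∑ n ∈ Finset.range L, lam ^ n • u U h n

lemma norm_s_le (U : H →L[ℂ] H) (hiso : ∀ x : H, ‖U x‖ = ‖x‖) (h : H)
    (lam : ℂ) (hl : ‖lam‖ = 1) (L : ℕ) : ‖s U h lam L‖ ≤ L * ‖h‖ := by
  refine le_trans (norm_sum_le _ _) ?_
  have : ∀ n ∈ Finset.range L, ‖lam ^ n • u U h n‖ = ‖h‖ := by
    intro n _
    rw [norm_smul, norm_pow, hl, one_pow, one_mul, norm_u U hiso]
  rw [Finset.sum_congr rfl this, Finset.sum_const, Finset.card_range, nsmul_eq_mul]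

lemma s_subadd (U : H →L[ℂ] H) (hiso : ∀ x : H, ‖U x‖ = ‖x‖) (h : H)
    (lam : ℂ) (hl : ‖lam‖ = 1) (a b : ℕ) :
    ‖s U h lam (a + b)‖ ≤ ‖s U h lam a‖ + ‖s U h lam b‖ := by
  have : s U h lam (a + b) = s U h lam a + lam ^ a • (U ^ a) (s U h lam b) := by
    rw [s, Finset.sum_range_add, s, s]
    congr 1
    rw [map_sum, Finset.smul_sum]
    refine Finset.sum_congr rfl fun n _ => ?_
    rw [map_smul, u_shift, smul_smul, ← pow_add, add_comm a n]
  rw [this]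
  refine le_trans (norm_add_le _ _) ?_
  rw [norm_smul, norm_pow, hl, one_pow, one_mul, norm_pow_apply U hiso]

/-- mean ergodic theorem: pointwise decay of rotated averages -/
lemma s_pointwise (U : H →L[ℂ] H) (hiso : ∀ x : H, ‖U x‖ = ‖x‖)
    (heig : ∀ (lam : ℂ) (x : H), ‖lam‖ = 1 → U x = lam • x → x = 0) (h : H)
    (lam : ℂ) (hl : ‖lam‖ = 1) :
    Tendsto (fun L : ℕ => ‖s U h lam L‖ / L) atTop (nhds 0) := by
  have hlam0 : lam ≠ 0 := by intro hc; rw [hc] at hl; simp at hl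
  set V : H →L[ℂ] H := lam • U with hV
  have hop : ‖V‖ ≤ 1 := by
    refine ContinuousLinearMap.opNorm_le_bound _ zero_le_one fun x => ?_
    rw [hV, ContinuousLinearMap.smul_apply, norm_smul, hl, one_mul, hiso, one_mul]
  have hproj := V.tendsto_birkhoffAverage_orthogonalProjection hop h
  have hmem : ∀ w : LinearMap.eqLocus (V : H →ₗ[ℂ] H) 1, (w : H) = 0 := by
    intro w
    have hw : V (w : H) = (w : H) := w.2
    have : U (w : H) = lam⁻¹ • (w : H) := by
      have := congrArg (fun z => lam⁻¹ • z) hw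
      simpa [hV, smul_smul, inv_mul_cancel₀ hlam0] using this
    exact heig lam⁻¹ _ (by rw [norm_inv, hl, inv_one]) this
  rw [show ∀ w : (((V : H →ₗ[ℂ] H).eqLocus ((1 : H →L[ℂ] H) : H →ₗ[ℂ] H)) : Submodule ℂ H), (w : H) = 0 from fun w => hmem w] at hproj
  have hzero : ∀ L : ℕ, birkhoffAverage ℂ (⇑V) id L h = (L : ℂ)⁻¹ • s U h lam L := by
    intro L
    rw [birkhoffAverage, birkhoffSum, s]
    congr 1
    refine Finset.sum_congr rfl fun n _ => ?_
    rw [id_eq, ← FunLike.coe_pow_eq_iterate, hV, smul_pow, ContinuousLinearMap.smul_apply]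
    rfl
  have := hproj.norm
  simp only [hzero, norm_zero] at this
  refine this.congr fun L => ?_
  rw [norm_smul, norm_inv, Complex.norm_natCast, div_eq_inv_mul]


lemma s_mul (U : H →L[ℂ] H) (hiso : ∀ x : H, ‖U x‖ = ‖x‖) (h : H)
    (lam : ℂ) (hl : ‖lam‖ = 1) (q l r : ℕ) :
    ‖s U h lam (q * l + r)‖ ≤ q * ‖s U h lam l‖ + ‖s U h lam r‖ := by
  induction q with
  | zero => simp
  | succ q ih =>
    have : (q + 1) * l + r = (q * l + r) + l := by ring
    rw [this]
    calc ‖s U h lam ((q * l + r) + l)‖ ≤ ‖s U h lam (q * l + r)‖ + ‖s U h lam l‖ :=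
          s_subadd U hiso h lam hl _ _
      _ ≤ (q * ‖s U h lam l‖ + ‖s U h lam r‖) + ‖s U h lam l‖ := by linarith
      _ = (q + 1 : ℕ) * ‖s U h lam l‖ + ‖s U h lam r‖ := by push_cast; ring

lemma s_uniform (U : H →L[ℂ] H) (hiso : ∀ x : H, ‖U x‖ = ‖x‖)
    (heig : ∀ (lam : ℂ) (x : H), ‖lam‖ = 1 → U x = lam • x → x = 0) (h : H) :
    ∀ ε : ℝ, 0 < ε → ∃ L₀ : ℕ, 1 ≤ L₀ ∧
      ∀ L, L₀ ≤ L → ∀ lam : ℂ, ‖lam‖ = 1 → ‖s U h lam L‖ ≤ ε * L := by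
  intro ε hε
  set C : ℝ := ‖h‖ + 1 with hC
  have hC0 : 0 < C := by positivity
  -- choice of good lengths
  have key : ∀ i : {lam : ℂ // ‖lam‖ = 1}, ∃ L : ℕ, 1 ≤ L ∧
      ‖s U h (i : ℂ) L‖ < ε / 2 * L := by
    intro ⟨lam, hl⟩
    have := s_pointwise U hiso heig h lam hl
    rw [Metric.tendsto_atTop] at this
    obtain ⟨N, hN⟩ := this (ε / 2) (by positivity)
    refine ⟨max N 1, le_max_right _ _, ?_⟩
    have h1 : (0 : ℝ) < (max N 1 : ℕ) := by positivity
    have := hN (max N 1) (le_max_left _ _)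
    rw [Real.dist_eq, sub_zero, abs_of_nonneg (by positivity)] at this
    calc ‖s U h lam (max N 1)‖ = ‖s U h lam (max N 1)‖ / (max N 1 : ℕ) * (max N 1 : ℕ) := by
          field_simp
      _ < ε / 2 * (max N 1 : ℕ) := by
          apply mul_lt_mul_of_pos_right this h1
  choose l hl1 hls using key
  -- compact cover
  set Sph : Set ℂ := Metric.sphere (0 : ℂ) 1 with hSph
  have hmem : ∀ lam : ℂ, lam ∈ Sph ↔ ‖lam‖ = 1 := by
    intro lam; rw [hSph, Metric.mem_sphere, dist_zero_right]
  have hcover : Sph ⊆ ⋃ i : {lam : ℂ // ‖lam‖ = 1},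
      {mu : ℂ | ‖s U h mu (l i)‖ < ε / 2 * (l i)} := by
    intro lam hlam
    exact Set.mem_iUnion.2 ⟨⟨lam, (hmem lam).1 hlam⟩, hls _⟩
  have hopen : ∀ i : {lam : ℂ // ‖lam‖ = 1},
      IsOpen {mu : ℂ | ‖s U h mu (l i)‖ < ε / 2 * (l i)} := by
    intro i
    have hcont : Continuous fun mu : ℂ => ‖s U h mu (l i)‖ := by
      apply Continuous.norm
      apply continuous_finset_sum
      intro n _
      exact (continuous_pow n).smul continuous_const
    exact isOpen_lt hcont continuous_const
  obtain ⟨t, ht⟩ := (isCompact_sphere (0 : ℂ) 1).elim_finite_subcover _ hopen hcover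
  set Lmax : ℕ := t.sup l + 1 with hLmax
  obtain ⟨L₀, hL₀⟩ := exists_nat_gt (2 * Lmax * C / ε + 1)
  refine ⟨max L₀ 1, le_max_right _ _, ?_⟩
  intro L hL lam hlam
  obtain ⟨i, hit, hi⟩ : ∃ i ∈ t, ‖s U h lam (l i)‖ < ε / 2 * (l i) := by
    have := ht ((hmem lam).2 hlam)
    simpa using this
  have hll : l i ≤ Lmax := by
    rw [hLmax]; exact le_trans (Finset.le_sup hit) (Nat.le_succ _)
  have hl0 : 0 < l i := hl1 i
  -- division
  set q := L / l i with hq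
  set r := L % l i with hr
  have hdiv : q * l i + r = L := by
    rw [hq, hr, Nat.mul_comm]; exact Nat.div_add_mod L (l i)
  have hbound : ‖s U h lam L‖ ≤ q * ‖s U h lam (l i)‖ + ‖s U h lam r‖ := by
    rw [← hdiv]; exact s_mul U hiso h lam hlam q (l i) r
  have hr1 : ‖s U h lam r‖ ≤ Lmax * C := by
    calc ‖s U h lam r‖ ≤ r * ‖h‖ := norm_s_le U hiso h lam hlam r
      _ ≤ Lmax * C := by
        have hrl : (r : ℝ) ≤ Lmax := by
          have : r < l i := Nat.mod_lt _ hl0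
          exact_mod_cast le_of_lt (lt_of_lt_of_le this hll)
        have : ‖h‖ ≤ C := by rw [hC]; linarith
        have h0 : (0:ℝ) ≤ ‖h‖ := norm_nonneg _
        nlinarith [norm_nonneg h, hrl, this]
  have hq1 : (q : ℝ) * ‖s U h lam (l i)‖ ≤ ε / 2 * L := by
    calc (q : ℝ) * ‖s U h lam (l i)‖ ≤ q * (ε / 2 * (l i)) := by
          apply mul_le_mul_of_nonneg_left (le_of_lt hi) (by positivity)
      _ = ε / 2 * (q * l i) := by ring
      _ ≤ ε / 2 * L := by
          apply mul_le_mul_of_nonneg_left _ (by positivity)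
          exact_mod_cast hdiv ▸ Nat.le_add_right (q * l i) r
  have hLbig : Lmax * C ≤ ε / 2 * L := by
    have hLL : (L₀ : ℝ) ≤ L := by exact_mod_cast le_trans (le_max_left L₀ 1) hL
    have : 2 * Lmax * C / ε < L := lt_of_lt_of_le (by linarith) hLL
    calc Lmax * C = ε / 2 * (2 * Lmax * C / ε) := by field_simp
      _ ≤ ε / 2 * L := by
          apply mul_le_mul_of_nonneg_left (le_of_lt this) (by positivity)
  calc ‖s U h lam L‖ ≤ q * ‖s U h lam (l i)‖ + ‖s U h lam r‖ := hbound
    _ ≤ ε / 2 * L + Lmax * C := add_le_add hq1 hr1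
    _ ≤ ε / 2 * L + ε / 2 * L := by linarith
    _ = ε * L := by ring


lemma rcoe (r : ℝ) : (RCLike.ofReal r : ℂ) = (r : ℂ) := rfl

lemma conj_of_norm_one {z : ℂ} (hz : ‖z‖ = 1) : (starRingEnd ℂ) z = z⁻¹ := by
  refine eq_inv_of_mul_eq_one_right ?_
  rw [Complex.mul_conj, Complex.normSq_eq_norm_sq, hz]
  norm_num

section Roots
variable (K : ℕ)

noncomputable def om : ℂ := Complex.exp (2 * Real.pi * Complex.I / K)

lemma om_pow_K (hK : K ≠ 0) : om K ^ K = 1 := (Complex.isPrimitiveRoot_exp K hK).pow_eq_one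

lemma om_ne_zero : om K ≠ 0 := Complex.exp_ne_zero _

lemma om_norm (hK : K ≠ 0) : ‖om K‖ = 1 := by
  have : (2 * Real.pi * Complex.I / K) = ((2 * Real.pi / K : ℝ) : ℂ) * Complex.I := by
    push_cast; ring
  rw [om, this, Complex.norm_exp_ofReal_mul_I]

lemma root_sum (hK : K ≠ 0) (a b : ℕ) (ha : a < K) (hb : b < K) :
    ∑ j ∈ Finset.range K, (om K ^ a * (om K ^ b)⁻¹) ^ j
      = if a = b then (K : ℂ) else 0 := by
  set z : ℂ := om K ^ a * (om K ^ b)⁻¹ with hzdef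
  by_cases hab : a = b
  · subst hab
    rw [if_pos rfl]
    have hz1 : z = 1 := mul_inv_cancel₀ (pow_ne_zero _ (om_ne_zero K))
    simp [hz1]
  · rw [if_neg hab]
    have hzK : z ^ K = 1 := by
      rw [hzdef, mul_pow, inv_pow, ← pow_mul, ← pow_mul, mul_comm a K, mul_comm b K,
        pow_mul, pow_mul, om_pow_K K hK, one_pow, one_pow]
      simp
    have hz1 : z ≠ 1 := by
      intro hc
      apply hab
      have hprim : IsPrimitiveRoot (om K) K := by
        have := Complex.isPrimitiveRoot_exp K hK
        unfold om
        convert this using 2 <;> ring_nf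
      refine hprim.pow_inj ha hb ?_
      have := congrArg (fun w => w * om K ^ b) hc
      simpa [hzdef, mul_assoc, inv_mul_cancel₀ (pow_ne_zero b (om_ne_zero K))] using this
    rw [geom_sum_eq hz1, hzK]
    simp

end Roots

section Chain
variable (U : H →L[ℂ] H) (hiso : ∀ x : H, ‖U x‖ = ‖x‖) (h : H)

lemma G_expand (z : ℂ) (hz : ‖z‖ = 1) (M : ℕ) :
    ⟪s U h z M, s U h z M⟫_ℂ
      = ∑ p ∈ Finset.range M ×ˢ Finset.range M,
          (z ^ p.2 * (z ^ p.1)⁻¹) * ⟪u U h p.1, u U h p.2⟫_ℂ := by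
  rw [Finset.sum_product, s, sum_inner]
  refine Finset.sum_congr rfl fun n _ => ?_
  rw [inner_sum]
  refine Finset.sum_congr rfl fun m _ => ?_
  rw [inner_smul_left, inner_smul_right, conj_of_norm_one (by rw [norm_pow, hz, one_pow])]
  ring

/-- Identity (III): second-moment identity -/
lemma sum_G (hiso : ∀ x : H, ‖U x‖ = ‖x‖) (K M : ℕ) (hK : K ≠ 0) (hMK : M ≤ K) :
    ∑ j ∈ Finset.range K, (‖s U h (om K ^ j) M‖ : ℝ) ^ 2 = (K : ℝ) * M * ‖h‖ ^ 2 := by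
  have hcx : ∑ j ∈ Finset.range K, (‖s U h (om K ^ j) M‖ : ℂ) ^ 2
      = (K : ℂ) * M * (‖h‖ : ℂ) ^ 2 := by
    have hexp : ∀ j ∈ Finset.range K, (‖s U h (om K ^ j) M‖ : ℂ) ^ 2
        = ∑ p ∈ Finset.range M ×ˢ Finset.range M,
            ((om K ^ p.2 * (om K ^ p.1)⁻¹) ^ j) * ⟪u U h p.1, u U h p.2⟫_ℂ := by
      intro j _
      have h1 : ((‖s U h (om K ^ j) M‖ : ℝ) : ℂ) ^ 2 = ⟪s U h (om K ^ j) M, s U h (om K ^ j) M⟫_ℂ := by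
        rw [inner_self_eq_norm_sq_to_K]; norm_cast
      rw [h1, G_expand U h _ (by rw [norm_pow, om_norm K hK, one_pow]) M]
      refine Finset.sum_congr rfl fun p _ => ?_
      rw [mul_pow, inv_pow, ← pow_right_comm, ← pow_right_comm]
      ring_nf
    rw [Finset.sum_congr rfl hexp, Finset.sum_comm]
    have : ∀ p ∈ Finset.range M ×ˢ Finset.range M,
        ∑ j ∈ Finset.range K, (om K ^ p.2 * (om K ^ p.1)⁻¹) ^ j * ⟪u U h p.1, u U h p.2⟫_ℂ
          = (if p.2 = p.1 then (K : ℂ) else 0) * ⟪u U h p.1, u U h p.2⟫_ℂ := by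
      intro p hp
      rw [← Finset.sum_mul, root_sum K hK p.2 p.1
        (lt_of_lt_of_le (Finset.mem_range.1 (Finset.mem_product.1 hp).2) hMK)
        (lt_of_lt_of_le (Finset.mem_range.1 (Finset.mem_product.1 hp).1) hMK)]
    rw [Finset.sum_congr rfl this, Finset.sum_product]
    have : ∀ n ∈ Finset.range M,
        ∑ m ∈ Finset.range M, (if m = n then (K : ℂ) else 0) * ⟪u U h n, u U h m⟫_ℂ
          = (K : ℂ) * (‖h‖ : ℂ) ^ 2 := by
      intro n hn
      have : ∀ m ∈ Finset.range M, (if m = n then (K : ℂ) else 0) * ⟪u U h n, u U h m⟫_ℂ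
          = if m = n then (K : ℂ) * ⟪u U h n, u U h m⟫_ℂ else 0 := by
        intro m _; split <;> simp
      rw [Finset.sum_congr rfl this, Finset.sum_ite_eq' (Finset.range M) n
        (fun m => (K : ℂ) * ⟪u U h n, u U h m⟫_ℂ), if_pos hn,
        inner_self_eq_norm_sq_to_K, norm_u U hiso, rcoe]
    rw [Finset.sum_congr rfl this, Finset.sum_const, Finset.card_range, nsmul_eq_mul]
    ring
  have h2 : ((∑ j ∈ Finset.range K, ‖s U h (om K ^ j) M‖ ^ 2 : ℝ) : ℂ)
      = (((K : ℝ) * M * ‖h‖ ^ 2 : ℝ) : ℂ) := by push_cast; exact_mod_cast hcx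
  exact_mod_cast h2

lemma mul_conj_norm (z : ℂ) : z * (starRingEnd ℂ) z = ((‖z‖ ^ 2 : ℝ) : ℂ) := by
  rw [Complex.mul_conj, Complex.normSq_eq_norm_sq]

lemma pair_conj (hiso : ∀ x : H, ‖U x‖ = ‖x‖) (n n' m m' : ℕ) (hsum : n' + m' = n + m) :
    ⟪u U h m, u U h m'⟫_ℂ = (starRingEnd ℂ) ⟪u U h n, u U h n'⟫_ℂ := by
  rw [inner_conj_symm]
  rcases le_total n' m with hc | hc
  · obtain ⟨c, rfl⟩ := Nat.exists_eq_add_of_le hc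
    have hm' : m' = n + c := by omega
    subst hm'
    exact d_shift U hiso h c n' n
  · obtain ⟨c, rfl⟩ := Nat.exists_eq_add_of_le hc
    have hn : n = m' + c := by omega
    subst hn
    exact (d_shift U hiso h c m m').symm

/-- Identity (I): fourth moment identity -/
lemma sum_G_sq (hiso : ∀ x : H, ‖U x‖ = ‖x‖) (K M : ℕ) (hK : K ≠ 0) (hMK : 2 * M ≤ K + 1) :
    ∑ j ∈ Finset.range K, (‖s U h (om K ^ j) M‖ : ℝ) ^ 4
      = (K : ℝ) * ∑ pq ∈ ((Finset.range M ×ˢ Finset.range M) ×ˢ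
            (Finset.range M ×ˢ Finset.range M)).filter
            (fun pq => pq.1.2 + pq.2.2 = pq.1.1 + pq.2.1),
          ‖⟪u U h pq.1.1, u U h pq.1.2⟫_ℂ‖ ^ 2 := by
  set P := Finset.range M ×ˢ Finset.range M with hP
  set d : ℕ × ℕ → ℂ := fun p => ⟪u U h p.1, u U h p.2⟫_ℂ with hd
  have hω : om K ≠ 0 := om_ne_zero K
  have hcx : ∑ j ∈ Finset.range K, ((‖s U h (om K ^ j) M‖ : ℝ) : ℂ) ^ 4
      = (K : ℂ) * ∑ pq ∈ (P ×ˢ P).filter (fun pq => pq.1.2 + pq.2.2 = pq.1.1 + pq.2.1),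
          ((‖d pq.1‖ ^ 2 : ℝ) : ℂ) := by
    have hGsq : ∀ j ∈ Finset.range K, ((‖s U h (om K ^ j) M‖ : ℝ) : ℂ) ^ 4
        = ∑ pq ∈ P ×ˢ P,
            (om K ^ (pq.1.2 + pq.2.2) * (om K ^ (pq.1.1 + pq.2.1))⁻¹) ^ j
              * (d pq.1 * d pq.2) := by
      intro j _
      have h1 : ((‖s U h (om K ^ j) M‖ : ℝ) : ℂ) ^ 4
          = ⟪s U h (om K ^ j) M, s U h (om K ^ j) M⟫_ℂ ^ 2 := by
        rw [inner_self_eq_norm_sq_to_K, rcoe]; push_cast; ring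
      rw [h1, G_expand U h _ (by rw [norm_pow, om_norm K hK, one_pow]) M, sq,
        Finset.sum_mul_sum]
      rw [← Finset.sum_product']
      refine Finset.sum_congr rfl fun pq _ => ?_
      simp only [hd]
      ring
    rw [Finset.sum_congr rfl hGsq, Finset.sum_comm]
    have hroot : ∀ pq ∈ P ×ˢ P,
        ∑ j ∈ Finset.range K,
            (om K ^ (pq.1.2 + pq.2.2) * (om K ^ (pq.1.1 + pq.2.1))⁻¹) ^ j
              * (d pq.1 * d pq.2)
          = (if pq.1.2 + pq.2.2 = pq.1.1 + pq.2.1 then (K : ℂ) else 0)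
              * (d pq.1 * d pq.2) := by
      intro pq hpq
      simp only [hP, Finset.mem_product, Finset.mem_range] at hpq
      rw [← Finset.sum_mul, root_sum K hK _ _ (by omega) (by omega)]
    rw [Finset.sum_congr rfl hroot]
    have hsplit : ∀ pq ∈ P ×ˢ P,
        (if pq.1.2 + pq.2.2 = pq.1.1 + pq.2.1 then (K : ℂ) else 0) * (d pq.1 * d pq.2)
          = if pq.1.2 + pq.2.2 = pq.1.1 + pq.2.1 then (K : ℂ) * (d pq.1 * d pq.2) else 0 := by
      intro pq _; split <;> simp
    rw [Finset.sum_congr rfl hsplit, ← Finset.sum_filter, Finset.mul_sum]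
    refine Finset.sum_congr rfl fun pq hpq => ?_
    rw [Finset.mem_filter] at hpq
    have hdq : d pq.2 = (starRingEnd ℂ) (d pq.1) :=
      pair_conj U h hiso pq.1.1 pq.1.2 pq.2.1 pq.2.2 hpq.2
    rw [hdq, mul_conj_norm]
  have h2 : ((∑ j ∈ Finset.range K, ‖s U h (om K ^ j) M‖ ^ 4 : ℝ) : ℂ)
      = (((K : ℝ) * ∑ pq ∈ (P ×ˢ P).filter (fun pq => pq.1.2 + pq.2.2 = pq.1.1 + pq.2.1),
          ‖d pq.1‖ ^ 2 : ℝ) : ℂ) := by push_cast; exact_mod_cast hcx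
  exact_mod_cast h2

/-- Lower bound (II) -/
lemma filter_lower (hiso : ∀ x : H, ‖U x‖ = ‖x‖) (N : ℕ) :
    (N : ℝ) ^ 2 * ∑ k ∈ Finset.range N, ‖⟪u U h 0, u U h k⟫_ℂ‖ ^ 2
      ≤ ∑ pq ∈ ((Finset.range (2 * N) ×ˢ Finset.range (2 * N)) ×ˢ
            (Finset.range (2 * N) ×ˢ Finset.range (2 * N))).filter
            (fun pq => pq.1.2 + pq.2.2 = pq.1.1 + pq.2.1),
          ‖⟪u U h pq.1.1, u U h pq.1.2⟫_ℂ‖ ^ 2 := by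
  classical
  set F := ((Finset.range (2 * N) ×ˢ Finset.range (2 * N)) ×ˢ
      (Finset.range (2 * N) ×ˢ Finset.range (2 * N))).filter
      (fun pq : (ℕ × ℕ) × (ℕ × ℕ) => pq.1.2 + pq.2.2 = pq.1.1 + pq.2.1) with hF
  set e : ℕ × ℕ × ℕ → (ℕ × ℕ) × (ℕ × ℕ) :=
    fun x => ((x.2.1, x.1 + x.2.1), (x.1 + x.2.2, x.2.2)) with he
  set src := Finset.range N ×ˢ (Finset.range N ×ˢ Finset.range N) with hsrc
  have hinj : ∀ x ∈ src, ∀ y ∈ src, e x = e y → x = y := by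
    intro x _ y _ hxy
    obtain ⟨x1, x2, x3⟩ := x
    obtain ⟨y1, y2, y3⟩ := y
    simp only [he, Prod.mk.injEq] at hxy
    have hc : x1 = y1 ∧ x2 = y2 ∧ x3 = y3 := by omega
    simp [hc.1, hc.2.1, hc.2.2]
  have hsub : Finset.image e src ⊆ F := by
    intro pq hpq
    rw [Finset.mem_image] at hpq
    obtain ⟨x, hx, rfl⟩ := hpq
    simp only [hsrc, Finset.mem_product, Finset.mem_range] at hx
    simp only [hF, Finset.mem_filter, Finset.mem_product, Finset.mem_range, he]
    constructor
    · refine ⟨⟨?_, ?_⟩, ?_, ?_⟩ <;> omega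
    · omega
  have himg : ∑ pq ∈ Finset.image e src, ‖⟪u U h pq.1.1, u U h pq.1.2⟫_ℂ‖ ^ 2
      = (N : ℝ) ^ 2 * ∑ k ∈ Finset.range N, ‖⟪u U h 0, u U h k⟫_ℂ‖ ^ 2 := by
    rw [Finset.sum_image hinj, hsrc, Finset.sum_product]
    have : ∀ k ∈ Finset.range N,
        ∑ y ∈ Finset.range N ×ˢ Finset.range N,
            ‖⟪u U h (e (k, y)).1.1, u U h (e (k, y)).1.2⟫_ℂ‖ ^ 2
          = (N : ℝ) ^ 2 * ‖⟪u U h 0, u U h k⟫_ℂ‖ ^ 2 := by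
      intro k _
      have hterm : ∀ y ∈ Finset.range N ×ˢ Finset.range N,
          ‖⟪u U h (e (k, y)).1.1, u U h (e (k, y)).1.2⟫_ℂ‖ ^ 2
            = ‖⟪u U h 0, u U h k⟫_ℂ‖ ^ 2 := by
        intro y _
        simp only [he]
        have := d_shift U hiso h y.1 0 k
        rw [Nat.zero_add] at this
        rw [this]
      rw [Finset.sum_congr rfl hterm, Finset.sum_const, Finset.card_product,
        Finset.card_range, nsmul_eq_mul]
      push_cast; ring
    rw [Finset.sum_congr rfl this, ← Finset.mul_sum]
  calc (N : ℝ) ^ 2 * ∑ k ∈ Finset.range N, ‖⟪u U h 0, u U h k⟫_ℂ‖ ^ 2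
      = ∑ pq ∈ Finset.image e src, ‖⟪u U h pq.1.1, u U h pq.1.2⟫_ℂ‖ ^ 2 := himg.symm
    _ ≤ ∑ pq ∈ F, ‖⟪u U h pq.1.1, u U h pq.1.2⟫_ℂ‖ ^ 2 :=
        Finset.sum_le_sum_of_subset_of_nonneg hsub (fun _ _ _ => by positivity)

/-- The main chain estimate -/
lemma chain (hiso : ∀ x : H, ‖U x‖ = ‖x‖) (N : ℕ) (hN : 1 ≤ N) (B : ℝ)
    (hB : ∀ lam : ℂ, ‖lam‖ = 1 → ‖s U h lam (2 * N)‖ ≤ B) :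
    (N : ℝ) ^ 2 * ∑ k ∈ Finset.range N, ‖⟪u U h 0, u U h k⟫_ℂ‖ ^ 2
      ≤ B ^ 2 * (2 * N) * ‖h‖ ^ 2 := by
  set K := 4 * N with hK
  have hK0 : K ≠ 0 := by omega
  have hB0 : 0 ≤ B := le_trans (norm_nonneg _) (hB 1 (by simp))
  have homn : ∀ j : ℕ, ‖om K ^ j‖ = 1 := by
    intro j; rw [norm_pow, om_norm K hK0, one_pow]
  have h4 : ∀ j ∈ Finset.range K, ‖s U h (om K ^ j) (2 * N)‖ ^ 4
      ≤ B ^ 2 * ‖s U h (om K ^ j) (2 * N)‖ ^ 2 := by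
    intro j _
    have h1 : ‖s U h (om K ^ j) (2 * N)‖ ≤ B := hB _ (homn j)
    have h2 : (0:ℝ) ≤ ‖s U h (om K ^ j) (2 * N)‖ := norm_nonneg _
    have h3 : ‖s U h (om K ^ j) (2 * N)‖ ^ 2 ≤ B ^ 2 := by nlinarith
    nlinarith [mul_le_mul_of_nonneg_right h3 (sq_nonneg (‖s U h (om K ^ j) (2 * N)‖))]
  have key : (K : ℝ) * ((N : ℝ) ^ 2 * ∑ k ∈ Finset.range N, ‖⟪u U h 0, u U h k⟫_ℂ‖ ^ 2)
      ≤ (K : ℝ) * (B ^ 2 * (2 * N) * ‖h‖ ^ 2) := by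
    calc (K : ℝ) * ((N : ℝ) ^ 2 * ∑ k ∈ Finset.range N, ‖⟪u U h 0, u U h k⟫_ℂ‖ ^ 2)
        ≤ (K : ℝ) * ∑ pq ∈ ((Finset.range (2 * N) ×ˢ Finset.range (2 * N)) ×ˢ
              (Finset.range (2 * N) ×ˢ Finset.range (2 * N))).filter
              (fun pq => pq.1.2 + pq.2.2 = pq.1.1 + pq.2.1),
            ‖⟪u U h pq.1.1, u U h pq.1.2⟫_ℂ‖ ^ 2 := by
          apply mul_le_mul_of_nonneg_left (filter_lower U h hiso N) (by positivity)
      _ = ∑ j ∈ Finset.range K, ‖s U h (om K ^ j) (2 * N)‖ ^ 4 :=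
          (sum_G_sq U h hiso K (2 * N) hK0 (by omega)).symm
      _ ≤ ∑ j ∈ Finset.range K, B ^ 2 * ‖s U h (om K ^ j) (2 * N)‖ ^ 2 :=
          Finset.sum_le_sum h4
      _ = B ^ 2 * ((K : ℝ) * (2 * N) * ‖h‖ ^ 2) := by
          rw [← Finset.mul_sum, sum_G U h hiso K (2 * N) hK0 (by omega)]
          push_cast; ring
      _ = (K : ℝ) * (B ^ 2 * (2 * N) * ‖h‖ ^ 2) := by ring
  have hKpos : (0:ℝ) < K := by positivity
  exact le_of_mul_le_mul_left key hKpos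

end Chain

lemma cesaro (U : H →L[ℂ] H) (hiso : ∀ x : H, ‖U x‖ = ‖x‖)
    (heig : ∀ (lam : ℂ) (x : H), ‖lam‖ = 1 → U x = lam • x → x = 0) (h : H) :
    Tendsto (fun N : ℕ => (∑ k ∈ Finset.range N, ‖⟪u U h 0, u U h k⟫_ℂ‖ ^ 2) / N)
      atTop (nhds 0) := by
  rw [Metric.tendsto_atTop]
  intro ε hε
  set C : ℝ := ‖h‖ ^ 2 + 1 with hC
  have hC0 : 0 < C := by positivity
  set δ : ℝ := min 1 (ε / (8 * C)) with hδ
  have hδ0 : 0 < δ := lt_min one_pos (by positivity)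
  have hδ1 : δ ≤ 1 := min_le_left _ _
  have hδ2 : δ ≤ ε / (8 * C) := min_le_right _ _
  obtain ⟨L₀, hL₀1, hL₀⟩ := s_uniform U hiso heig h δ hδ0
  refine ⟨max L₀ 1, fun N hN => ?_⟩
  have hN1 : 1 ≤ N := le_trans (le_max_right _ _) hN
  have hNL : L₀ ≤ 2 * N := by
    have := le_trans (le_max_left L₀ 1) hN; omega
  have hNpos : (0:ℝ) < N := by exact_mod_cast hN1
  have hB : ∀ lam : ℂ, ‖lam‖ = 1 → ‖s U h lam (2 * N)‖ ≤ δ * (2 * N) := by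
    intro lam hl
    have := hL₀ (2 * N) hNL lam hl
    exact_mod_cast this
  have hch := chain U h hiso N hN1 (δ * (2 * N)) hB
  have hsum0 : 0 ≤ ∑ k ∈ Finset.range N, ‖⟪u U h 0, u U h k⟫_ℂ‖ ^ 2 :=
    Finset.sum_nonneg fun k _ => by positivity
  have hkey : (∑ k ∈ Finset.range N, ‖⟪u U h 0, u U h k⟫_ℂ‖ ^ 2) / N ≤ 8 * δ ^ 2 * ‖h‖ ^ 2 := by
    rw [div_le_iff₀ hNpos]
    have hNsq : (0:ℝ) < (N:ℝ) ^ 2 := by positivity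
    nlinarith [hch, hNsq]
  have hlt : 8 * δ ^ 2 * ‖h‖ ^ 2 < ε := by
    have hδδ : δ ^ 2 ≤ ε / (8 * C) := by nlinarith
    have h1 : 8 * δ ^ 2 * ‖h‖ ^ 2 ≤ 8 * (ε / (8 * C)) * ‖h‖ ^ 2 := by nlinarith [sq_nonneg ‖h‖]
    have h2 : 8 * (ε / (8 * C)) * ‖h‖ ^ 2 < ε := by
      rw [hC]
      have : ε / (8 * (‖h‖ ^ 2 + 1)) * 8 * ‖h‖ ^ 2 < ε := by
        rw [div_mul_eq_mul_div, div_mul_eq_mul_div, div_lt_iff₀ (by positivity)]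
        nlinarith [sq_nonneg ‖h‖]
      linarith [this]
    linarith
  rw [Real.dist_eq, sub_zero, abs_of_nonneg (by positivity)]
  exact lt_of_le_of_lt hkey hlt

lemma cesaro_shift (U : H →L[ℂ] H) (hiso : ∀ x : H, ‖U x‖ = ‖x‖)
    (heig : ∀ (lam : ℂ) (x : H), ‖lam‖ = 1 → U x = lam • x → x = 0) (h : H) (m : ℕ) :
    Tendsto (fun N : ℕ => (∑ k ∈ Finset.range N, ‖⟪u U h m, u U h k⟫_ℂ‖ ^ 2) / N)
      atTop (nhds 0) := by
  set a : ℕ → ℝ := fun k => ‖⟪u U h 0, u U h k⟫_ℂ‖ ^ 2 with ha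
  set b : ℕ → ℝ := fun k => ‖⟪u U h m, u U h k⟫_ℂ‖ ^ 2 with hb
  have ha0 : ∀ k, 0 ≤ a k := fun k => by positivity
  set C : ℝ := (‖h‖ * ‖h‖) ^ 2 with hC
  have hbC : ∀ k, b k ≤ C := by
    intro k
    have := norm_inner_le_norm (𝕜 := ℂ) (u U h m) (u U h k)
    rw [norm_u U hiso, norm_u U hiso] at this
    have h0 : (0:ℝ) ≤ ‖⟪u U h m, u U h k⟫_ℂ‖ := norm_nonneg _
    show ‖⟪u U h m, u U h k⟫_ℂ‖ ^ 2 ≤ (‖h‖ * ‖h‖) ^ 2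
    nlinarith
  have hble : ∀ N : ℕ, m ≤ N → ∑ k ∈ Finset.range N, b k
      ≤ m * C + ∑ k ∈ Finset.range N, a k := by
    intro N hmN
    obtain ⟨t, rfl⟩ := Nat.exists_eq_add_of_le hmN
    rw [Finset.sum_range_add]
    have h1 : ∑ k ∈ Finset.range m, b k ≤ m * C := by
      calc ∑ k ∈ Finset.range m, b k ≤ ∑ k ∈ Finset.range m, C :=
            Finset.sum_le_sum fun k _ => hbC k
        _ = m * C := by rw [Finset.sum_const, Finset.card_range, nsmul_eq_mul]
    have h2 : ∀ k ∈ Finset.range t, b (m + k) = a k := by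
      intro k _
      have := d_shift U hiso h m 0 k
      rw [Nat.zero_add] at this
      rw [hb, ha]
      simp only
      rw [add_comm k m] at this
      rw [this]
    have h3 : ∑ k ∈ Finset.range t, b (m + k) ≤ ∑ k ∈ Finset.range (m + t), a k := by
      rw [Finset.sum_congr rfl h2]
      apply Finset.sum_le_sum_of_subset_of_nonneg
      · apply Finset.range_subset_range.2; omega
      · intro k _ _; exact ha0 k
    linarith
  have hg : Tendsto (fun N : ℕ => (m * C) / N + (∑ k ∈ Finset.range N, a k) / N)
      atTop (nhds 0) := by
    have h1 : Tendsto (fun N : ℕ => (m * C) / N) atTop (nhds 0) :=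
      tendsto_const_div_atTop_nhds_zero_nat _
    have h2 := cesaro U hiso heig h
    simpa using h1.add h2
  apply tendsto_of_tendsto_of_tendsto_of_le_of_le' tendsto_const_nhds hg
  · filter_upwards [eventually_ge_atTop 1] with N hN
    positivity
  · filter_upwards [eventually_ge_atTop m] with N hN
    have hNpos : m ≤ N := hN
    rcases Nat.eq_zero_or_pos N with h0 | h0
    · subst h0; simp
    have : (0:ℝ) < N := by exact_mod_cast h0
    rw [← add_div, div_le_div_iff₀ this this]
    have := hble N hNpos
    nlinarith [this]

open Finset in
lemma kvn (b : ℕ → ℕ → ℝ) (hb0 : ∀ m n, 0 ≤ b m n)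
    (hces : ∀ m, Tendsto (fun N : ℕ => (∑ k ∈ Finset.range N, b m k) / N) atTop (nhds 0)) :
    ∃ S : Set ℕ, HasDensity S 1 ∧ ∀ m, Tendsto (b m) (atTop ⊓ Filter.principal S) (nhds 0) := by
  classical
  -- bad sets
  set Bad : ℕ → Set ℕ := fun m => {n | ∃ i ≤ m, 1 / (m + 1 : ℝ) < b i n} with hBad
  have hBadMono : ∀ {j m : ℕ}, j ≤ m → ∀ {n}, n ∈ Bad j → n ∈ Bad m := by
    intro j m hjm n hn
    obtain ⟨i, hij, hbi⟩ := hn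
    refine ⟨i, le_trans hij hjm, lt_of_le_of_lt ?_ hbi⟩
    apply one_div_le_one_div_of_le (by positivity)
    push_cast; linarith [(Nat.cast_le (α := ℝ)).2 hjm]
  -- density of bad sets tends to zero
  have hbadcard : ∀ m : ℕ, Tendsto
      (fun N : ℕ => ((Finset.range N).filter (· ∈ Bad m)).card / (N : ℝ)) atTop (nhds 0) := by
    intro m
    have hub : ∀ N : ℕ, ((Finset.range N).filter (· ∈ Bad m)).card / (N : ℝ)
        ≤ (m + 1 : ℝ) * ∑ i ∈ Finset.range (m + 1), ((∑ k ∈ Finset.range N, b i k) / N) := by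
      intro N
      rcases Nat.eq_zero_or_pos N with rfl | hN
      · simp
      have hNpos : (0:ℝ) < N := by exact_mod_cast hN
      rw [div_le_iff₀ hNpos]
      have hkey : (((Finset.range N).filter (· ∈ Bad m)).card : ℝ) * (1 / (m + 1 : ℝ))
          ≤ ∑ i ∈ Finset.range (m + 1), ∑ k ∈ Finset.range N, b i k := by
        calc (((Finset.range N).filter (· ∈ Bad m)).card : ℝ) * (1 / (m + 1 : ℝ))
            = ∑ _n ∈ (Finset.range N).filter (· ∈ Bad m), (1 / (m + 1 : ℝ)) := by
              rw [Finset.sum_const, nsmul_eq_mul]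
          _ ≤ ∑ n ∈ (Finset.range N).filter (· ∈ Bad m),
                ∑ i ∈ Finset.range (m + 1), b i n := by
              apply Finset.sum_le_sum
              intro n hn
              rw [Finset.mem_filter] at hn
              obtain ⟨i, him, hbi⟩ := hn.2
              calc (1 / (m + 1 : ℝ)) ≤ b i n := le_of_lt hbi
                _ ≤ ∑ i' ∈ Finset.range (m + 1), b i' n := by
                    apply Finset.single_le_sum (fun i' _ => hb0 i' n)
                    rw [Finset.mem_range]; omega
          _ ≤ ∑ n ∈ Finset.range N, ∑ i ∈ Finset.range (m + 1), b i n := by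
              apply Finset.sum_le_sum_of_subset_of_nonneg (Finset.filter_subset _ _)
              intro n _ _
              exact Finset.sum_nonneg fun i _ => hb0 i n
          _ = ∑ i ∈ Finset.range (m + 1), ∑ k ∈ Finset.range N, b i k := Finset.sum_comm
      have hm1 : (0:ℝ) < (m + 1 : ℝ) := by positivity
      calc (((Finset.range N).filter (· ∈ Bad m)).card : ℝ)
          = ((((Finset.range N).filter (· ∈ Bad m)).card : ℝ) * (1 / (m + 1 : ℝ))) * (m+1) := by
            field_simp
        _ ≤ (∑ i ∈ Finset.range (m + 1), ∑ k ∈ Finset.range N, b i k) * (m+1) := by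
            apply mul_le_mul_of_nonneg_right hkey (le_of_lt hm1)
        _ = ((m + 1 : ℝ) * ∑ i ∈ Finset.range (m + 1),
              ((∑ k ∈ Finset.range N, b i k) / N)) * N := by
            have hNne : (N:ℝ) ≠ 0 := ne_of_gt hNpos
            rw [← Finset.sum_div]
            field_simp
    have hg : Tendsto (fun N : ℕ => (m + 1 : ℝ) * ∑ i ∈ Finset.range (m + 1),
        ((∑ k ∈ Finset.range N, b i k) / N)) atTop (nhds 0) := by
      have : Tendsto (fun N : ℕ => ∑ i ∈ Finset.range (m + 1),
          ((∑ k ∈ Finset.range N, b i k) / N)) atTop (nhds 0) := by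
        have := tendsto_finset_sum (Finset.range (m + 1)) (fun i _ => hces i)
        simpa using this
      simpa using this.const_mul (m + 1 : ℝ)
    apply tendsto_of_tendsto_of_tendsto_of_le_of_le tendsto_const_nhds hg
    · intro N; positivity
    · exact hub
  -- choose thresholds
  have hthr : ∀ m : ℕ, ∃ Tm : ℕ, ∀ N ≥ Tm,
      ((Finset.range N).filter (· ∈ Bad m)).card / (N : ℝ) ≤ 1 / (m + 1 : ℝ) := by
    intro m
    have := (hbadcard m).eventually (eventually_le_nhds (by positivity :
      (0:ℝ) < 1 / (m + 1 : ℝ)))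
    rw [eventually_atTop] at this
    obtain ⟨Tm, hTm⟩ := this
    exact ⟨Tm, hTm⟩
  choose f hf using hthr
  -- strictly monotone thresholds
  set T : ℕ → ℕ := fun m => (∑ i ∈ Finset.range (m + 1), f i) + m with hT
  have hTf : ∀ m, f m ≤ T m := by
    intro m
    have : f m ≤ ∑ i ∈ Finset.range (m + 1), f i :=
      Finset.single_le_sum (fun i _ => Nat.zero_le _) (Finset.self_mem_range_succ m)
    simp only [hT]
    omega
  have hTmono : StrictMono T := by
    apply strictMono_nat_of_lt_succ
    intro m
    have hs : ∑ i ∈ Finset.range (m + 1 + 1), f i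
        = ∑ i ∈ Finset.range (m + 1), f i + f (m + 1) := Finset.sum_range_succ f (m + 1)
    simp only [hT]
    omega
  have hTm_ge : ∀ m, m ≤ T m := fun m => Nat.le_add_left m _
  set S : Set ℕ := {n | ∀ j, T j ≤ n → n < T (j + 1) → n ∉ Bad j} with hS
  -- interval index
  have hindex : ∀ m n : ℕ, T m ≤ n → ∃ j, m ≤ j ∧ T j ≤ n ∧ n < T (j + 1) := by
    intro m n hmn
    have hmn' : m ≤ n := le_trans (hTm_ge m) hmn
    set j := Nat.findGreatest (fun j => T j ≤ n) n with hj
    refine ⟨j, Nat.le_findGreatest (P := fun j => T j ≤ n) (n := n) hmn' hmn,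
      Nat.findGreatest_spec (P := fun j => T j ≤ n) (n := n) hmn' hmn, ?_⟩
    rcases le_or_gt (j + 1) n with hc | hc
    · have hng := Nat.findGreatest_is_greatest (P := fun j => T j ≤ n) (n := n)
        (Nat.lt_succ_self j) hc
      by_contra hcon
      push_neg at hcon
      exact hng hcon
    · have := hTm_ge (j + 1); omega
  -- S elements are good
  have hSbound : ∀ i m n : ℕ, i ≤ m → T m ≤ n → n ∈ S → b i n ≤ 1 / (m + 1 : ℝ) := by
    intro i m n him hTmn hnS
    obtain ⟨j, hmj, hj1, hj2⟩ := hindex m n hTmn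
    have hnB : n ∉ Bad j := hnS j hj1 hj2
    by_contra hcon
    push_neg at hcon
    apply hnB
    refine ⟨i, le_trans him hmj, lt_of_le_of_lt ?_ hcon⟩
    apply one_div_le_one_div_of_le (by positivity)
    push_cast
    linarith [(Nat.cast_le (α := ℝ)).2 hmj]
  refine ⟨S, ?_, ?_⟩
  · -- density 1
    rw [HasDensity, Metric.tendsto_atTop]
    intro ε hε
    obtain ⟨m, hm⟩ := exists_nat_gt (2 / ε)
    have hm' : 2 < ε * m := by
      rw [div_lt_iff₀ hε] at hm; linarith
    refine ⟨max (T m) 1, fun N hN => ?_⟩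
    have hN1 : 1 ≤ N := le_trans (le_max_right _ _) hN
    have hTmN : T m ≤ N := le_trans (le_max_left _ _) hN
    have hT0N : T 0 ≤ N := le_trans (hTmono.le_iff_le.2 (Nat.zero_le m)) hTmN
    obtain ⟨jN, _, hjN1, hjN2⟩ := hindex 0 N hT0N
    have hjNm : m ≤ jN := by
      by_contra hc
      push_neg at hc
      have h1 : T (jN + 1) ≤ T m := hTmono.le_iff_le.2 (by omega)
      omega
    set cin := ((Finset.Icc 1 N).filter (· ∈ S)).card with hcin
    set cout := ((Finset.Icc 1 N).filter (· ∉ S)).card with hcout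
    have hsplit : cin + cout = N := by
      rw [hcin, hcout]
      rw [Finset.card_filter_add_card_filter_not]
      · simp [Nat.card_Icc]
    have hind : ∑ k ∈ Finset.Icc 1 N, Set.indicator S (fun _ => (1:ℝ)) k = (cin : ℝ) := by
      have hig : ∀ k ∈ Finset.Icc 1 N, Set.indicator S (fun _ => (1:ℝ)) k
          = if k ∈ S then (1:ℝ) else 0 := fun k _ => Set.indicator_apply S _ k
      rw [Finset.sum_congr rfl hig, Finset.sum_boole]
    -- complement bound
    set cbad := ((Finset.range (N + 1)).filter (· ∈ Bad jN)).card with hcbad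
    have hsub : (Finset.Icc 1 N).filter (· ∉ S) ⊆ (Finset.range (N + 1)).filter (· ∈ Bad jN) := by
      intro n hn
      rw [Finset.mem_filter, Finset.mem_Icc] at hn
      obtain ⟨⟨hn1, hn2⟩, hnS⟩ := hn
      rw [hS, Set.mem_setOf_eq] at hnS
      push_neg at hnS
      obtain ⟨j, hj1, hj2, hjB⟩ := hnS
      have hjjN : j ≤ jN := by
        have h1 : T j ≤ N := le_trans hj1 hn2
        by_contra hc
        push_neg at hc
        have : T (jN + 1) ≤ T j := hTmono.le_iff_le.2 (by omega)
        omega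
      rw [Finset.mem_filter, Finset.mem_range]
      exact ⟨by omega, hBadMono hjjN hjB⟩
    have hcoutbad : cout ≤ cbad := Finset.card_le_card hsub
    have hfbound := hf jN (N + 1) (by have := hTf jN; omega)
    have hNpos : (0:ℝ) < N := by exact_mod_cast hN1
    have hN1pos : (0:ℝ) < (N:ℝ) + 1 := by positivity
    have hjNpos : (0:ℝ) < (jN:ℝ) + 1 := by positivity
    have hcb : (cbad : ℝ) * ((jN:ℝ) + 1) ≤ (N:ℝ) + 1 := by
      have h1 := hfbound
      push_cast at h1
      rw [div_le_div_iff₀ hN1pos hjNpos] at h1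
      linarith
    -- final numeric estimate
    have hdist : dist ((cin : ℝ) / N) 1 = (cout : ℝ) / N := by
      rw [Real.dist_eq]
      have hcinN : (cin : ℝ) + cout = N := by exact_mod_cast hsplit
      rw [abs_sub_comm]
      rw [abs_of_nonneg]
      · field_simp
        linarith
      · rw [sub_nonneg, div_le_one hNpos]
        linarith [Nat.cast_nonneg (α := ℝ) cout]
    rw [hind, hdist]
    -- cout / N < ε
    rw [div_lt_iff₀ hNpos]
    have hcoutR : (cout : ℝ) ≤ cbad := by exact_mod_cast hcoutbad
    have hmjNR : (m : ℝ) + 1 ≤ (jN : ℝ) + 1 := by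
      have := (Nat.cast_le (α := ℝ)).2 hjNm; linarith
    have hNR1 : (1:ℝ) ≤ (N:ℝ) := by exact_mod_cast hN1
    have h2N : (N : ℝ) + 1 ≤ 2 * N := by linarith
    have hc1 : (cout : ℝ) * ((m:ℝ) + 1) ≤ 2 * N := by
      calc (cout : ℝ) * ((m:ℝ)+1) ≤ (cbad : ℝ) * ((jN:ℝ)+1) := by
            apply mul_le_mul hcoutR hmjNR (by positivity) (Nat.cast_nonneg _)
        _ ≤ (N:ℝ) + 1 := hcb
        _ ≤ 2 * N := h2N
    have hm0 : (0:ℝ) ≤ m := Nat.cast_nonneg _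
    nlinarith [mul_lt_mul_of_pos_right hm' hNpos, Nat.cast_nonneg (α := ℝ) cout]
  · -- convergence along S
    intro i
    rw [Metric.tendsto_nhds]
    intro ε hε
    obtain ⟨m, hm⟩ := exists_nat_gt (max (i : ℝ) (1 / ε))
    have him : i ≤ m := by
      have := lt_of_le_of_lt (le_max_left (i:ℝ) (1/ε)) hm
      exact_mod_cast le_of_lt this
    have hmε : 1 / ε < m := lt_of_le_of_lt (le_max_right _ _) hm
    rw [eventually_inf_principal]
    filter_upwards [eventually_ge_atTop (T m)] with n hn hnS
    have hbn := hSbound i m n him hn hnS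
    rw [Real.dist_eq, sub_zero, abs_of_nonneg (hb0 i n)]
    calc b i n ≤ 1 / ((m:ℝ) + 1) := hbn
      _ < ε := by
        rw [div_lt_iff₀ (by positivity)]
        rw [div_lt_iff₀ hε] at hmε
        nlinarith


end Stmt15Aux

open Stmt15Aux in
/-- A unitary operator on a Hilbert space without unimodular eigenvalues is almost
weakly stable: every orbit converges weakly to 0 along a set of density 1. -/
theorem stmt15 {H : Type*} [NormedAddCommGroup H] [InnerProductSpace ℂ H] [CompleteSpace H]
    (U : H →L[ℂ] H) (hiso : ∀ x : H, ‖U x‖ = ‖x‖) (hsurj : Function.Surjective U)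
    (heig : ∀ (lam : ℂ) (h : H), ‖lam‖ = 1 → U h = lam • h → h = 0) :
    ∀ h : H, ∃ S : Set ℕ, HasDensity S 1 ∧
      ∀ y : H, Tendsto (fun n : ℕ => ⟪y, (U ^ n) h⟫_ℂ)
        (atTop ⊓ Filter.principal S) (nhds 0) := by
  intro h
  obtain ⟨S, hdens, hconv⟩ := kvn (fun m n => ‖⟪u U h m, u U h n⟫_ℂ‖ ^ 2)
    (fun m n => by positivity) (fun m => cesaro_shift U hiso heig h m)
  refine ⟨S, hdens, ?_⟩
  intro y
  set F := atTop ⊓ Filter.principal S with hF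
  -- convergence for orbit vectors
  have hUm : ∀ m : ℕ, Tendsto (fun n => ⟪u U h m, u U h n⟫_ℂ) F (nhds 0) := by
    intro m
    rw [tendsto_zero_iff_norm_tendsto_zero]
    have h1 : Tendsto (fun n => Real.sqrt (‖⟪u U h m, u U h n⟫_ℂ‖ ^ 2)) F (nhds 0) := by
      have := (hconv m).sqrt
      simpa using this
    refine h1.congr fun n => ?_
    rw [Real.sqrt_sq (norm_nonneg _)]
  -- the closed cyclic subspace
  set Z := (Submodule.span ℂ (Set.range (u U h))).topologicalClosure with hZ
  haveI : CompleteSpace Z := (Submodule.isClosed_topologicalClosure _).completeSpace_coe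
  have huZ : ∀ n, u U h n ∈ Z :=
    fun n => Submodule.le_topologicalClosure _ (Submodule.subset_span (Set.mem_range_self n))
  set Py : H := (Submodule.orthogonalProjectionOnto Z y : H) with hPy
  have hyP : ∀ n, ⟪y, u U h n⟫_ℂ = ⟪Py, u U h n⟫_ℂ := by
    intro n
    have horth := Z.starProjection_inner_eq_zero y (u U h n) (huZ n)
    have : ⟪y - Py, u U h n⟫_ℂ = 0 := horth
    rw [inner_sub_left] at this
    linear_combination this
  -- convergence for span elements
  have hspan : ∀ p : H, p ∈ Submodule.span ℂ (Set.range (u U h)) →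
      Tendsto (fun n => ⟪p, u U h n⟫_ℂ) F (nhds 0) := by
    intro p hp
    obtain ⟨k, c, g, hg⟩ := Submodule.mem_span_set'.1 hp
    have hexp : (fun n => ⟪p, u U h n⟫_ℂ)
        = fun n => ∑ i : Fin k, (starRingEnd ℂ) (c i) * ⟪(g i : H), u U h n⟫_ℂ := by
      funext n
      rw [← hg, sum_inner]
      exact Finset.sum_congr rfl fun i _ => inner_smul_left _ _ _
    rw [hexp]
    have hterm : ∀ i : Fin k,
        Tendsto (fun n => (starRingEnd ℂ) (c i) * ⟪(g i : H), u U h n⟫_ℂ) F (nhds 0) := by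
      intro i
      obtain ⟨m, hm⟩ := (g i).2
      have := (hUm m).const_mul ((starRingEnd ℂ) (c i))
      simp only [mul_zero] at this
      refine this.congr fun n => ?_
      rw [hm]
    have := tendsto_finset_sum Finset.univ (fun i (_ : i ∈ Finset.univ) => hterm i)
    simpa using this
  -- approximate and conclude
  have hPZ : Py ∈ closure ((Submodule.span ℂ (Set.range (u U h)) : Submodule ℂ H) : Set H) := by
    have h1 : Py ∈ Z := (Submodule.orthogonalProjectionOnto Z y).2
    have h2 : ((Z : Submodule ℂ H) : Set H)
        = closure ((Submodule.span ℂ (Set.range (u U h)) : Submodule ℂ H) : Set H) :=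
      Submodule.topologicalClosure_coe _
    rw [← h2]
    exact h1
  rw [Metric.tendsto_nhds]
  intro ε hε
  set δ : ℝ := ε / (2 * (‖h‖ + 1)) with hδ
  have hδ0 : 0 < δ := by positivity
  obtain ⟨p, hpspan, hpd⟩ := Metric.mem_closure_iff.1 hPZ δ hδ0
  have hptend := hspan p hpspan
  have hev := (Metric.tendsto_nhds.1 hptend) (ε / 2) (by positivity)
  filter_upwards [hev] with n hn
  rw [dist_zero_right] at hn ⊢
  have hsplit : ⟪y, (U ^ n) h⟫_ℂ = ⟪Py - p, u U h n⟫_ℂ + ⟪p, u U h n⟫_ℂ := by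
    have : ⟪y, (U ^ n) h⟫_ℂ = ⟪Py, u U h n⟫_ℂ := hyP n
    rw [this, inner_sub_left]
    ring
  rw [hsplit]
  have h1 : ‖⟪Py - p, u U h n⟫_ℂ‖ ≤ ε / 2 := by
    calc ‖⟪Py - p, u U h n⟫_ℂ‖ ≤ ‖Py - p‖ * ‖u U h n‖ := norm_inner_le_norm _ _
      _ = ‖Py - p‖ * ‖h‖ := by rw [norm_u U hiso]
      _ ≤ δ * (‖h‖ + 1) := by
          have hd : ‖Py - p‖ ≤ δ := by
            rw [← dist_eq_norm]; exact le_of_lt hpd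
          have h0 : (0:ℝ) ≤ ‖h‖ := norm_nonneg _
          nlinarith [norm_nonneg (Py - p)]
      _ = ε / 2 := by
          have hne : ‖h‖ + 1 ≠ 0 := by positivity
          rw [hδ]; field_simp
  calc ‖⟪Py - p, u U h n⟫_ℂ + ⟪p, u U h n⟫_ℂ‖
      ≤ ‖⟪Py - p, u U h n⟫_ℂ‖ + ‖⟪p, u U h n⟫_ℂ‖ := norm_add_le _ _
    _ < ε / 2 + ε / 2 := by
        apply add_lt_add_of_le_of_lt h1 hn
    _ = ε := by ring
end
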